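/- arXiv:2006.08046 — 6 statements merged into one kernel-verified Lean document; each statement's English description precedes it below -/
import Mathlib

section
/- Let H be an infinite-dimensional complex separable Hilbert space, A ∈ B(H), 0 < L < ∞, and G ⊂ H a countable family of vectors. If {e^{tA}g}_{g∈G, t∈[0,L]} is a semi-continuous frame for H, then G is infinite. -/
open MeasureTheory
open scoped ComplexInnerProductSpace Nat

noncomputable section

variable {H : Type*} [NormedAddCommGroup H] [InnerProductSpace ℂ H] [CompleteSpace H]

/-- The operator exponential `e^{tA}` for a bounded operator `A`. -/
def expT (A : H →L[ℂ] H) (t : ℝ) : H →L[ℂ] H :=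
  NormedSpace.exp ((t : ℂ) • A)

/-- `G` is a Bessel system in `H`. -/
def IsBesselSet (G : Set H) : Prop :=
  ∃ K > (0 : ℝ), ∀ f : H, ∑' g : G, ‖⟪f, (g : H)⟫‖ ^ 2 ≤ K * ‖f‖ ^ 2

/-- `{e^{tA} g}_{g ∈ G, t ∈ S}` is a semi-continuous frame for `H`. -/
def SemiContFrame (A : H →L[ℂ] H) (G : Set H) (S : Set ℝ) : Prop :=
  ∃ c > (0 : ℝ), ∃ C > (0 : ℝ), ∀ f : H,
    c * ‖f‖ ^ 2 ≤ ∑' g : G, ∫ t in S, ‖⟪f, expT A t (g : H)⟫‖ ^ 2 ∧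
    ∑' g : G, ∫ t in S, ‖⟪f, expT A t (g : H)⟫‖ ^ 2 ≤ C * ‖f‖ ^ 2

/-- `{e^{t_j A} g}_{g ∈ G, j}` is a frame for `H`, for a finite list of times `t`. -/
def FinTimeFrame (A : H →L[ℂ] H) (G : Set H) {n : ℕ} (t : Fin n → ℝ) : Prop :=
  ∃ c > (0 : ℝ), ∃ C > (0 : ℝ), ∀ f : H,
    c * ‖f‖ ^ 2 ≤ ∑' g : G, ∑ j, ‖⟪f, expT A (t j) (g : H)⟫‖ ^ 2 ∧
    ∑' g : G, ∑ j, ‖⟪f, expT A (t j) (g : H)⟫‖ ^ 2 ≤ C * ‖f‖ ^ 2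

/-- `{e^{t_j A} g}_{g ∈ G, j ∈ ℕ}` is a frame for `H`, for a countable set of times `t`. -/
def NatTimeFrame (A : H →L[ℂ] H) (G : Set H) (t : ℕ → ℝ) : Prop :=
  ∃ c > (0 : ℝ), ∃ C > (0 : ℝ), ∀ f : H,
    c * ‖f‖ ^ 2 ≤ ∑' g : G, ∑' j : ℕ, ‖⟪f, expT A (t j) (g : H)⟫‖ ^ 2 ∧
    ∑' g : G, ∑' j : ℕ, ‖⟪f, expT A (t j) (g : H)⟫‖ ^ 2 ≤ C * ‖f‖ ^ 2

/-- The semigroup `{e^{tA}}_{t ≥ 0}` is exponentially stable. -/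
def ExpStable (A : H →L[ℂ] H) : Prop :=
  ∃ M ≥ (1 : ℝ), ∃ ω < (0 : ℝ), ∀ t : ℝ, 0 ≤ t → ‖expT A t‖ ≤ M * Real.exp (ω * t)

set_option maxHeartbeats 1600000 in
theorem stmt1
    {H : Type*} [NormedAddCommGroup H] [InnerProductSpace ℂ H] [CompleteSpace H]
    [TopologicalSpace.SeparableSpace H]
    (hinf : ¬ FiniteDimensional ℂ H)
    (A : H →L[ℂ] H) (L : ℝ) (hL : 0 < L)
    (G : Set H) (hGc : G.Countable)
    (hframe : SemiContFrame A G (Set.Icc 0 L)) :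
    G.Infinite := by
  by_contra hfin
  rw [Set.not_infinite] at hfin
  haveI : Fintype G := hfin.fintype
  obtain ⟨c, hc, C, hC, hf⟩ := hframe
  set q : ℝ := L * ‖A‖ with hq
  have hq0 : 0 ≤ q := mul_nonneg hL.le (norm_nonneg A)
  have hsumq : Summable (fun k : ℕ => q ^ k / k !) := Real.summable_pow_div_factorial q
  set r : ℕ → ℝ := fun n => ∑' k : ℕ, q ^ (k + n) / (k + n)! with hr_def
  have hr0 : ∀ n, 0 ≤ r n := fun n =>
    tsum_nonneg fun k => div_nonneg (pow_nonneg hq0 _) (Nat.cast_nonneg _)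
  have hrtend : Filter.Tendsto r Filter.atTop (nhds 0) :=
    tendsto_sum_nat_add (fun k => q ^ k / k !)
  -- key construction: for each n, a unit vector almost orthogonal to all e^{tA} g
  have key : ∀ n : ℕ, ∃ e : H, ‖e‖ = 1 ∧ ∀ g ∈ G, ∀ t ∈ Set.Icc (0:ℝ) L,
      ‖⟪e, expT A t g⟫‖ ≤ ‖g‖ * r n := by
    intro n
    set K : Submodule ℂ H :=
      Submodule.span ℂ (Set.range (fun p : Fin n × G => (A ^ (p.1 : ℕ)) (p.2 : H))) with hK
    haveI : FiniteDimensional ℂ K := by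
      apply FiniteDimensional.span_of_finite
      exact Set.finite_range _
    have hKne : K ≠ ⊤ := by
      intro htop
      exact hinf (FiniteDimensional.of_surjective K.subtype
        (by rw [← LinearMap.range_eq_top, Submodule.range_subtype, htop]))
    have horth : Kᗮ ≠ ⊥ := by
      rw [Ne, Submodule.orthogonal_eq_bot_iff]
      exact hKne
    obtain ⟨x, hxK, hx0⟩ := Submodule.exists_mem_ne_zero_of_ne_bot horth
    refine ⟨‖x‖⁻¹ • x, ?_, ?_⟩
    · rw [norm_smul, norm_inv, norm_norm, inv_mul_cancel₀ (norm_ne_zero_iff.2 hx0)]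
    intro g hg t ht
    set e : H := ‖x‖⁻¹ • x with he
    have heK : e ∈ Kᗮ := Submodule.smul_mem _ _ hxK
    set B : H →L[ℂ] H := (t : ℂ) • A with hB
    have hBsum : Summable fun k : ℕ => ((k ! : ℂ))⁻¹ • B ^ k :=
      NormedSpace.expSeries_summable' B
    have hasum : Summable fun k : ℕ => ((k ! : ℂ))⁻¹ • (B ^ k) g := by
      have := (ContinuousLinearMap.apply ℂ H g).summable hBsum
      simpa using this
    have hexp : expT A t g = ∑' k : ℕ, ((k ! : ℂ))⁻¹ • (B ^ k) g := by
      rw [expT, ← hB, NormedSpace.exp_eq_tsum ℂ]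
      have := (ContinuousLinearMap.apply ℂ H g).map_tsum hBsum
      simpa using this
    -- the partial sum lies in K
    set P : H := ∑ k ∈ Finset.range n, ((k ! : ℂ))⁻¹ • (B ^ k) g with hP
    have hPK : P ∈ K := by
      apply Submodule.sum_mem
      intro k hk
      apply Submodule.smul_mem
      have : (B ^ k) g = ((t : ℂ) ^ k) • (A ^ k) g := by
        rw [hB, smul_pow, ContinuousLinearMap.smul_apply]
      rw [this]
      apply Submodule.smul_mem
      apply Submodule.subset_span
      exact ⟨(⟨k, Finset.mem_range.1 hk⟩, ⟨g, hg⟩), rfl⟩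
    have hinnerP : ⟪e, P⟫ = 0 := by
      have h0 := (Submodule.mem_orthogonal K e).1 heK P hPK
      rw [← inner_conj_symm, h0, map_zero]
    have hsplit : ⟪e, expT A t g⟫ = ⟪e, expT A t g - P⟫ := by
      rw [inner_sub_right, hinnerP, sub_zero]
    -- the tail
    have htail : expT A t g - P = ∑' k : ℕ, ((k + n)! : ℂ)⁻¹ • (B ^ (k + n)) g := by
      have h := Summable.sum_add_tsum_nat_add (f := fun k : ℕ => ((k ! : ℂ))⁻¹ • (B ^ k) g) n hasum
      rw [hexp, hP, ← h, add_sub_cancel_left]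
    -- norm bounds
    have hBle : ‖B‖ ≤ q := by
      rw [hB, norm_smul, Complex.norm_real, Real.norm_eq_abs, abs_of_nonneg ht.1, hq]
      gcongr
      exact ht.2
    have hterm : ∀ m : ℕ, ‖((m ! : ℂ))⁻¹ • (B ^ m) g‖ ≤ ‖g‖ * (q ^ m / m !) := by
      intro m
      rw [norm_smul]
      have h1 : ‖((m ! : ℂ))⁻¹‖ = ((m !: ℝ))⁻¹ := by
        rw [norm_inv, Complex.norm_natCast]
      have h2 : ‖(B ^ m) g‖ ≤ q ^ m * ‖g‖ := by
        have hstep : ∀ j : ℕ, ‖(B ^ j) g‖ ≤ ‖B‖ ^ j * ‖g‖ := by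
          intro j
          induction j with
          | zero => simp
          | succ j ih =>
            have hj : (B ^ (j + 1)) g = B ((B ^ j) g) := by
              rw [pow_succ']; rfl
            rw [hj]
            calc ‖B ((B ^ j) g)‖ ≤ ‖B‖ * ‖(B ^ j) g‖ := B.le_opNorm _
            _ ≤ ‖B‖ * (‖B‖ ^ j * ‖g‖) := by
                have := norm_nonneg B
                gcongr
            _ = ‖B‖ ^ (j + 1) * ‖g‖ := by ring
        calc ‖(B ^ m) g‖ ≤ ‖B‖ ^ m * ‖g‖ := hstep m
        _ ≤ q ^ m * ‖g‖ := by
            gcongr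
      rw [h1]
      calc ((m !:ℝ))⁻¹ * ‖(B ^ m) g‖ ≤ ((m !:ℝ))⁻¹ * (q ^ m * ‖g‖) := by
            gcongr
      _ = ‖g‖ * (q ^ m / m !) := by ring
    have hnormsum : Summable fun k : ℕ => ‖((k ! : ℂ))⁻¹ • (B ^ k) g‖ := by
      apply Summable.of_nonneg_of_le (fun k => norm_nonneg _) hterm
      exact hsumq.mul_left ‖g‖
    have htailsum : Summable fun k : ℕ => ‖(((k + n)! : ℂ))⁻¹ • (B ^ (k + n)) g‖ :=
      (summable_nat_add_iff n).2 hnormsum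
    calc ‖⟪e, expT A t g⟫‖ = ‖⟪e, expT A t g - P⟫‖ := by rw [hsplit]
    _ ≤ ‖e‖ * ‖expT A t g - P‖ := norm_inner_le_norm e _
    _ ≤ 1 * ‖expT A t g - P‖ := by
        gcongr
        rw [he, norm_smul, norm_inv, norm_norm, inv_mul_cancel₀ (norm_ne_zero_iff.2 hx0)]
    _ = ‖∑' k : ℕ, (((k + n)! : ℂ))⁻¹ • (B ^ (k + n)) g‖ := by rw [one_mul, htail]
    _ ≤ ∑' k : ℕ, ‖(((k + n)! : ℂ))⁻¹ • (B ^ (k + n)) g‖ := norm_tsum_le_tsum_norm htailsum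
    _ ≤ ∑' k : ℕ, ‖g‖ * (q ^ (k + n) / (k + n)!) := by
        apply Summable.tsum_le_tsum (fun k => hterm (k + n)) htailsum
        exact ((summable_nat_add_iff n).2 (hsumq.mul_left ‖g‖))
    _ = ‖g‖ * r n := by rw [hr_def, tsum_mul_left]
  -- conclude: the lower frame bound forces c ≤ 0
  set D : ℝ := L * ∑ g : G, ‖(g : H)‖ ^ 2 with hD
  have hbound : ∀ n : ℕ, c ≤ r n * r n * D := by
    intro n
    obtain ⟨e, he1, he2⟩ := key n
    have hlow := (hf e).1
    rw [he1, one_pow, mul_one] at hlow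
    refine hlow.trans ?_
    rw [tsum_fintype]
    have hint : ∀ g : G, (∫ t in Set.Icc (0:ℝ) L, ‖⟪e, expT A t (g:H)⟫‖ ^ 2) ≤
        r n * r n * (L * ‖(g:H)‖ ^ 2) := by
      intro g
      have hc1 : Continuous fun t : ℝ => expT A t (g : H) := by
        have h1 : Continuous fun t : ℝ => NormedSpace.exp ((t:ℂ) • A) :=
          (continuous_iff_continuousAt.2 fun x => (NormedSpace.exp_analytic (𝕂 := ℂ) x).continuousAt).comp (by continuity)
        exact (ContinuousLinearMap.apply ℂ H ((g:H))).continuous.comp h1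
      have hmeas : AEStronglyMeasurable (fun t : ℝ => ‖⟪e, expT A t (g:H)⟫‖ ^ 2)
          (volume.restrict (Set.Icc (0:ℝ) L)) := by
        apply Continuous.aestronglyMeasurable
        exact ((Continuous.inner continuous_const hc1).norm).pow 2
      have hCbound : ∀ x ∈ Set.Icc (0:ℝ) L,
          ‖‖⟪e, expT A x (g:H)⟫‖ ^ 2‖ ≤ (‖(g:H)‖ * r n) ^ 2 := by
        intro x hx
        rw [Real.norm_eq_abs, abs_of_nonneg (by positivity)]
        exact pow_le_pow_left₀ (norm_nonneg _) (he2 (g:H) g.2 x hx) 2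
      have hle := norm_setIntegral_le_of_norm_le_const (μ := volume)
        (s := Set.Icc (0:ℝ) L) (C := (‖(g:H)‖ * r n) ^ 2) measure_Icc_lt_top hCbound
      rw [Real.volume_real_Icc_of_le (by linarith)] at hle
      calc (∫ t in Set.Icc (0:ℝ) L, ‖⟪e, expT A t (g:H)⟫‖ ^ 2)
          ≤ ‖∫ t in Set.Icc (0:ℝ) L, ‖⟪e, expT A t (g:H)⟫‖ ^ 2‖ := le_abs_self _
      _ ≤ (‖(g:H)‖ * r n) ^ 2 * (L - 0) := hle
      _ = r n * r n * (L * ‖(g:H)‖ ^ 2) := by ring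
    calc (∑ g : G, ∫ t in Set.Icc (0:ℝ) L, ‖⟪e, expT A t (g:H)⟫‖ ^ 2)
        ≤ ∑ g : G, r n * r n * (L * ‖(g:H)‖ ^ 2) := Finset.sum_le_sum fun g _ => hint g
    _ = r n * r n * D := by rw [hD, Finset.mul_sum, Finset.mul_sum]
  have h0 : Filter.Tendsto (fun n => r n * r n * D) Filter.atTop (nhds 0) := by
    have h := (hrtend.mul hrtend).mul_const D
    simpa using h
  have hc0 : c ≤ 0 := ge_of_tendsto' h0 hbound
  exact absurd hc0 (not_le.2 hc)

end
end

section
/- Let H be a complex separable Hilbert space, A ∈ B(H), and let G ⊂ H be a countable Bessel system. Assume the semigroup {e^{tA}}_{t≥0} is exponentially stable. Then the following are equivalent: (i) {e^{tA}g}_{g∈G, t∈[0,∞)} is a semi-continuous frame for H; (ii) there exists δ > 0 such that for every countable set T = {t_j : j ∈ ℕ} with t_1 = 0, t_j strictly increasing, inf_j (t_{j+1} − t_j) > 0, and t_{j+1} − t_j < δ for all j ∈ ℕ, the system {e^{tA}g}_{g∈G, t∈T} is a frame for H; (iii) there exists m > 0 such that for T = {j·m : j = 0, 1, 2, …} the system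 {e^{tA}g}_{g∈G, t∈T} is a frame for H. -/
open MeasureTheory
open scoped ComplexInnerProductSpace

noncomputable section

variable {H : Type*} [NormedAddCommGroup H] [InnerProductSpace ℂ H] [CompleteSpace H]

open scoped Nat
set_option maxHeartbeats 1000000

section AuxHelpers
variable {H : Type*} [NormedAddCommGroup H] [InnerProductSpace ℂ H] [CompleteSpace H]

lemma expT_zero (A : H →L[ℂ] H) : expT A 0 = 1 := by
  simp [expT, NormedSpace.exp_zero]

lemma expT_cont (A : H →L[ℂ] H) : Continuous (expT A) := by
  let +nondep : NormedAlgebra ℚ (H →L[ℂ] H) := .restrictScalars ℚ ℂ _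
  exact NormedSpace.exp_continuous.comp (Complex.continuous_ofReal.smul continuous_const)

lemma expT_apply_cont (A : H →L[ℂ] H) (g : H) : Continuous fun t => expT A t g := by
  have : Continuous fun B : H →L[ℂ] H => B g := ContinuousLinearMap.apply ℂ H g |>.continuous
  exact this.comp (expT_cont A)

lemma expT_add (A : H →L[ℂ] H) (s t : ℝ) : expT A (s + t) = expT A s * expT A t := by
  unfold expT
  rw [Complex.ofReal_add, add_smul]
  let +nondep : NormedAlgebra ℚ (H →L[ℂ] H) := .restrictScalars ℚ ℂ _
  exact NormedSpace.exp_add_of_commute (((Commute.refl A).smul_left _).smul_right _)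

lemma norm_exp_sub_one (x : H →L[ℂ] H) :
    ‖NormedSpace.exp x - 1‖ ≤ ‖x‖ * Real.exp ‖x‖ := by
  have hsum : Summable fun n : ℕ => (n ! : ℂ)⁻¹ • x ^ n :=
    NormedSpace.expSeries_summable' (𝕂 := ℂ) x
  have hexp : NormedSpace.exp x = ∑' n : ℕ, (n ! : ℂ)⁻¹ • x ^ n := by
    rw [NormedSpace.exp_eq_tsum ℂ]
  have h0 : ((0:ℕ)! : ℂ)⁻¹ • x ^ 0 = 1 := by norm_num
  have hshift : NormedSpace.exp x - 1 = ∑' n : ℕ, ((n+1)! : ℂ)⁻¹ • x ^ (n+1) := by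
    rw [hexp, Summable.tsum_eq_zero_add hsum, h0, add_sub_cancel_left]
  have hnorm : ∀ n : ℕ, ‖((n+1)! : ℂ)⁻¹ • x ^ (n+1)‖ ≤ ‖x‖ * (‖x‖ ^ n / n !) := by
    intro n
    rw [norm_smul]
    have h1 : ‖((n+1)! : ℂ)⁻¹‖ = (((n+1)! : ℝ))⁻¹ := by
      rw [norm_inv]; norm_num
    have h2 : ‖x ^ (n+1)‖ ≤ ‖x‖ ^ (n+1) := norm_pow_le' x (Nat.succ_pos n)
    have h3 : (((n+1)! : ℝ))⁻¹ ≤ ((n ! : ℝ))⁻¹ := by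
      apply inv_anti₀
      · positivity
      · exact_mod_cast Nat.factorial_le (Nat.le_succ n)
    calc ‖((n+1)! : ℂ)⁻¹‖ * ‖x ^ (n+1)‖ ≤ ((n ! : ℝ))⁻¹ * ‖x‖ ^ (n+1) := by
          rw [h1]
          exact mul_le_mul h3 h2 (norm_nonneg _) (by positivity)
      _ = ‖x‖ * (‖x‖ ^ n / n !) := by rw [pow_succ]; ring
  have hs2 : Summable fun n : ℕ => ‖((n+1)! : ℂ)⁻¹ • x ^ (n+1)‖ :=
    (summable_nat_add_iff 1).2 (NormedSpace.norm_expSeries_summable' (𝕂 := ℂ) x)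
  have hs3 : Summable fun n : ℕ => ‖x‖ * (‖x‖ ^ n / n !) :=
    (Real.summable_pow_div_factorial ‖x‖).mul_left _
  calc ‖NormedSpace.exp x - 1‖ ≤ ∑' n : ℕ, ‖((n+1)! : ℂ)⁻¹ • x ^ (n+1)‖ := by
        rw [hshift]; exact norm_tsum_le_tsum_norm hs2
    _ ≤ ∑' n : ℕ, ‖x‖ * (‖x‖ ^ n / n !) := Summable.tsum_le_tsum hnorm hs2 hs3
    _ = ‖x‖ * ∑' n : ℕ, ‖x‖ ^ n / n ! := tsum_mul_left
    _ = ‖x‖ * Real.exp ‖x‖ := by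
        congr 1
        rw [Real.exp_eq_exp_ℝ, NormedSpace.exp_eq_tsum_div]

lemma norm_expT_sub_one (A : H →L[ℂ] H) {u : ℝ} (hu : 0 ≤ u) :
    ‖expT A u - 1‖ ≤ u * ‖A‖ * Real.exp (u * ‖A‖) := by
  have h := norm_exp_sub_one ((u : ℂ) • A)
  have hn : ‖(u : ℂ) • A‖ = u * ‖A‖ := by
    rw [norm_smul, Complex.norm_real, Real.norm_eq_abs, abs_of_nonneg hu]
  rwa [hn] at h

lemma expT_sub_norm (A : H →L[ℂ] H) {M ω : ℝ}
    (hst : ∀ u : ℝ, 0 ≤ u → ‖expT A u‖ ≤ M * Real.exp (ω * u)) {s t : ℝ}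
    (hs : 0 ≤ s) (h : s ≤ t) :
    ‖expT A t - expT A s‖
      ≤ M * Real.exp (ω * s) * ((t - s) * ‖A‖ * Real.exp ((t - s) * ‖A‖)) := by
  have hdec : expT A t = expT A s * expT A (t - s) := by
    rw [← expT_add A s (t - s)]; ring_nf
  have : expT A t - expT A s = expT A s * (expT A (t - s) - 1) := by
    rw [mul_sub, mul_one, hdec]
  rw [this]
  calc ‖expT A s * (expT A (t - s) - 1)‖ ≤ ‖expT A s‖ * ‖expT A (t - s) - 1‖ := norm_mul_le _ _
    _ ≤ (M * Real.exp (ω * s)) * ((t - s) * ‖A‖ * Real.exp ((t - s) * ‖A‖)) := by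
        apply mul_le_mul (hst s hs) (norm_expT_sub_one A (by linarith)) (norm_nonneg _)
        have := (norm_nonneg (expT A s)).trans (hst s hs)
        exact this

end AuxHelpers

section Chunk2
variable {H : Type*} [NormedAddCommGroup H] [InnerProductSpace ℂ H] [CompleteSpace H]

/-- Honest Bessel property. -/
def HBessel (G : Set H) (K : ℝ) : Prop :=
  ∀ f : H, Summable (fun g : G => ‖⟪f, (g : H)⟫‖ ^ 2) ∧
    ∑' g : G, ‖⟪f, (g : H)⟫‖ ^ 2 ≤ K * ‖f‖ ^ 2

lemma HBessel.op {G : Set H} {K : ℝ} (hB : HBessel G K) (hK : 0 ≤ K)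
    (B : H →L[ℂ] H) (f : H) :
    Summable (fun g : G => ‖⟪f, B (g : H)⟫‖ ^ 2) ∧
      ∑' g : G, ‖⟪f, B (g : H)⟫‖ ^ 2 ≤ K * (‖B‖ ^ 2 * ‖f‖ ^ 2) := by
  have key : (fun g : G => ‖⟪f, B (g : H)⟫‖ ^ 2)
      = fun g : G => ‖⟪(ContinuousLinearMap.adjoint B) f, (g : H)⟫‖ ^ 2 := by
    funext g; rw [ContinuousLinearMap.adjoint_inner_left]
  have h1 := hB ((ContinuousLinearMap.adjoint B) f)
  have hn : ‖(ContinuousLinearMap.adjoint B) f‖ ^ 2 ≤ ‖B‖ ^ 2 * ‖f‖ ^ 2 := by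
    have h2 : ‖(ContinuousLinearMap.adjoint B) f‖ ≤ ‖B‖ * ‖f‖ := by
      have := (ContinuousLinearMap.adjoint B).le_opNorm f
      rwa [LinearIsometryEquiv.norm_map ContinuousLinearMap.adjoint B] at this
    calc ‖(ContinuousLinearMap.adjoint B) f‖ ^ 2 ≤ (‖B‖ * ‖f‖) ^ 2 :=
          pow_le_pow_left₀ (norm_nonneg _) h2 2
      _ = ‖B‖ ^ 2 * ‖f‖ ^ 2 := by ring
  refine ⟨key ▸ h1.1, ?_⟩
  rw [key]
  exact h1.2.trans (by nlinarith [h1.2, hn])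
end Chunk2
section Chunk3
variable {H : Type*} [NormedAddCommGroup H] [InnerProductSpace ℂ H] [CompleteSpace H]

lemma HBessel.finsum {G : Set H} {K : ℝ} (hB : HBessel G K) (hK : 0 ≤ K)
    (B : H →L[ℂ] H) (f : H) (s : Finset G) :
    ∑ g ∈ s, ‖⟪f, B (g : H)⟫‖ ^ 2 ≤ K * (‖B‖ ^ 2 * ‖f‖ ^ 2) :=
  (Summable.sum_le_tsum s (fun _ _ => by positivity) (hB.op hK B f).1).trans (hB.op hK B f).2

lemma cont_h (A : H →L[ℂ] H) (f g : H) :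
    Continuous fun t : ℝ => ‖⟪f, expT A t g⟫‖ ^ 2 :=
  ((continuous_const.inner (expT_apply_cont A g)).norm.pow 2)

lemma h_le {A : H →L[ℂ] H} {M ω : ℝ}
    (hst : ∀ u : ℝ, 0 ≤ u → ‖expT A u‖ ≤ M * Real.exp (ω * u))
    (hM : 0 ≤ M) (f g : H) {t : ℝ} (ht : 0 ≤ t) :
    ‖⟪f, expT A t g⟫‖ ^ 2 ≤ (M * ‖f‖ * ‖g‖) ^ 2 * Real.exp (2 * ω * t) := by
  have h1 : ‖⟪f, expT A t g⟫‖ ≤ ‖f‖ * ((M * Real.exp (ω * t)) * ‖g‖) := by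
    calc ‖⟪f, expT A t g⟫‖ ≤ ‖f‖ * ‖expT A t g‖ := norm_inner_le_norm _ _
      _ ≤ ‖f‖ * ((M * Real.exp (ω * t)) * ‖g‖) := by
          apply mul_le_mul_of_nonneg_left _ (norm_nonneg f)
          calc ‖expT A t g‖ ≤ ‖expT A t‖ * ‖g‖ := (expT A t).le_opNorm g
            _ ≤ (M * Real.exp (ω * t)) * ‖g‖ :=
                mul_le_mul_of_nonneg_right (hst t ht) (norm_nonneg g)
  have h2 : Real.exp (ω * t) ^ 2 = Real.exp (2 * ω * t) := by
    rw [sq, ← Real.exp_add]; ring_nf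
  calc ‖⟪f, expT A t g⟫‖ ^ 2 ≤ (‖f‖ * ((M * Real.exp (ω * t)) * ‖g‖)) ^ 2 :=
        pow_le_pow_left₀ (norm_nonneg _) h1 2
    _ = (M * ‖f‖ * ‖g‖) ^ 2 * Real.exp (ω * t) ^ 2 := by ring
    _ = (M * ‖f‖ * ‖g‖) ^ 2 * Real.exp (2 * ω * t) := by rw [h2]

lemma exp2_integrable {ω : ℝ} (hω : ω < 0) :
    IntegrableOn (fun t : ℝ => Real.exp (2 * ω * t)) (Set.Ici 0) := by
  have h : (fun t : ℝ => Real.exp (2 * ω * t)) = fun t => Real.exp (-(-(2 * ω)) * t) := by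
    funext t; ring_nf
  rw [h]
  exact (integrableOn_Ici_iff_integrableOn_Ioi (by finiteness)).2 (exp_neg_integrableOn_Ioi 0 (by linarith))

lemma int_h {A : H →L[ℂ] H} {M ω : ℝ}
    (hst : ∀ u : ℝ, 0 ≤ u → ‖expT A u‖ ≤ M * Real.exp (ω * u))
    (hM : 0 ≤ M) (hω : ω < 0) (f g : H) :
    IntegrableOn (fun t => ‖⟪f, expT A t g⟫‖ ^ 2) (Set.Ici 0) := by
  apply Integrable.mono' ((exp2_integrable hω).const_mul ((M * ‖f‖ * ‖g‖) ^ 2))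
  · exact (cont_h A f g).aestronglyMeasurable
  · rw [ae_restrict_iff' measurableSet_Ici]
    filter_upwards with t ht
    rw [Real.norm_eq_abs, abs_of_nonneg (by positivity)]
    exact h_le hst hM f g ht

lemma V_pos {ω : ℝ} (hω : ω < 0) :
    0 < ∫ t in Set.Ici (0:ℝ), Real.exp (2 * ω * t) := by
  have hsub : Set.Ico (0:ℝ) 1 ⊆ Set.Ici 0 := Set.Ico_subset_Ici_self
  have h1 : ∫ t in Set.Ico (0:ℝ) 1, Real.exp (2 * ω * t)
      ≤ ∫ t in Set.Ici (0:ℝ), Real.exp (2 * ω * t) := by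
    apply setIntegral_mono_set (exp2_integrable hω)
    · filter_upwards with t using Real.exp_nonneg _
    · exact hsub.eventuallyLE
  have h2 : (∫ t in Set.Ico (0:ℝ) 1, Real.exp (2 * ω)) 
      ≤ ∫ t in Set.Ico (0:ℝ) 1, Real.exp (2 * ω * t) := by
    apply setIntegral_mono_on
    · exact integrableOn_const (by rw [Real.volume_Ico]; exact ENNReal.ofReal_ne_top)
    · exact ((exp2_integrable hω).mono_set hsub)
    · exact measurableSet_Ico
    · intro t ht
      apply Real.exp_le_exp.2
      nlinarith [ht.1, ht.2]
  have h3 : (∫ _ in Set.Ico (0:ℝ) 1, Real.exp (2 * ω)) = Real.exp (2 * ω) := by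
    rw [setIntegral_const, Real.volume_real_Ico]
    norm_num
  rw [h3] at h2
  linarith [Real.exp_pos (2 * ω), h2, h1]

lemma sq_lower {a x y : ℝ} (ha : 0 ≤ a) (hy : 0 ≤ y) (h : x ≤ a + y) (hx : 0 ≤ x) :
    x ^ 2 / 2 - y ^ 2 ≤ a ^ 2 := by
  nlinarith [mul_nonneg (by linarith : (0:ℝ) ≤ a + y - x) (by linarith : (0:ℝ) ≤ a + y + x),
    sq_nonneg (a - y)]

lemma sq_upper {a x y : ℝ} (ha : 0 ≤ a) (hy : 0 ≤ y) (h : x ≤ a + y) (hx : 0 ≤ x) :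
    x ^ 2 ≤ 2 * a ^ 2 + 2 * y ^ 2 := by
  nlinarith [mul_nonneg (by linarith : (0:ℝ) ≤ a + y - x) (by linarith : (0:ℝ) ≤ a + y + x),
    sq_nonneg (a - y)]

lemma tj_ge {t : ℕ → ℝ} {δ₀ : ℝ} (h0 : t 0 = 0)
    (hgap : ∀ j : ℕ, δ₀ ≤ t (j + 1) - t j) : ∀ j : ℕ, (j : ℝ) * δ₀ ≤ t j := by
  intro j
  induction j with
  | zero => simp [h0]
  | succ n ih => push_cast; have := hgap n; push_cast at ih; linarith

lemma partition_Ici {t : ℕ → ℝ} (h0 : t 0 = 0) (hm : StrictMono t)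
    (hub : ∀ x : ℝ, ∃ j, x < t j) :
    Set.Ici (0:ℝ) = ⋃ j, Set.Ico (t j) (t (j + 1)) := by
  ext x
  simp only [Set.mem_Ici, Set.mem_iUnion, Set.mem_Ico]
  constructor
  · intro hx
    have hex : ∃ j, x < t j := hub x
    set n := Nat.find hex with hn
    have hxn : x < t n := Nat.find_spec hex
    have hn0 : n ≠ 0 := by
      intro h
      rw [h, h0] at hxn; linarith
    obtain ⟨k, hk⟩ := Nat.exists_eq_succ_of_ne_zero hn0
    refine ⟨k, ?_, ?_⟩
    · have := Nat.find_min hex (m := k) (by omega)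
      push_neg at this
      exact this
    · rw [← Nat.succ_eq_add_one, ← hk]; exact hxn
  · rintro ⟨j, hj, _⟩
    have : t 0 ≤ t j := hm.monotone (Nat.zero_le j)
    rw [h0] at this; linarith

lemma double_sum_approx {ι : Type*} {a : ι → ℕ → ℝ} (h0 : ∀ g j, 0 ≤ a g j)
    (hin : ∀ g, Summable (a g)) (hout : Summable fun g => ∑' j, a g j)
    {ε : ℝ} (hε : 0 < ε) :
    ∃ (s : Finset ι) (N : ℕ),
      (∑' g, ∑' j, a g j) - ε ≤ ∑ g ∈ s, ∑ j ∈ Finset.range N, a g j := by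
  have h1 : ∀ᶠ s in Filter.atTop,
      (∑' g, ∑' j, a g j) - ε / 2 < ∑ g ∈ s, ∑' j, a g j :=
    hout.hasSum.eventually (eventually_gt_nhds (by linarith))
  obtain ⟨s, hs⟩ := h1.exists
  have h2 : Filter.Tendsto (fun N => ∑ g ∈ s, ∑ j ∈ Finset.range N, a g j)
      Filter.atTop (nhds (∑ g ∈ s, ∑' j, a g j)) :=
    tendsto_finset_sum s (fun g _ => (hin g).hasSum.tendsto_sum_nat)
  have h3 : ∀ᶠ N in Filter.atTop,
      (∑ g ∈ s, ∑' j, a g j) - ε / 2 < ∑ g ∈ s, ∑ j ∈ Finset.range N, a g j :=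
    h2.eventually (eventually_gt_nhds (by linarith))
  obtain ⟨N, hN⟩ := h3.exists
  exact ⟨s, N, by linarith⟩
end Chunk3
section Chunk4
variable {H : Type*} [NormedAddCommGroup H] [InnerProductSpace ℂ H] [CompleteSpace H]

lemma normsq_expT_le {A : H →L[ℂ] H} {M ω : ℝ}
    (hst : ∀ u : ℝ, 0 ≤ u → ‖expT A u‖ ≤ M * Real.exp (ω * u))
    (hM : 0 ≤ M) {t : ℝ} (ht : 0 ≤ t) :
    ‖expT A t‖ ^ 2 ≤ M ^ 2 * Real.exp (2 * ω * t) := by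
  have h2 : Real.exp (ω * t) ^ 2 = Real.exp (2 * ω * t) := by
    rw [sq, ← Real.exp_add]; ring_nf
  calc ‖expT A t‖ ^ 2 ≤ (M * Real.exp (ω * t)) ^ 2 :=
        pow_le_pow_left₀ (norm_nonneg _) (hst t ht) 2
    _ = M ^ 2 * Real.exp (ω * t) ^ 2 := by ring
    _ = M ^ 2 * Real.exp (2 * ω * t) := by rw [h2]

lemma Phi_bound {A : H →L[ℂ] H} {G : Set H} {K M ω : ℝ} (hB : HBessel G K) (hK : 0 ≤ K)
    (hM : 0 ≤ M) (hω : ω < 0)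
    (hst : ∀ u : ℝ, 0 ≤ u → ‖expT A u‖ ≤ M * Real.exp (ω * u)) (f : H) :
    Summable (fun g : G => ∫ t in Set.Ici (0:ℝ), ‖⟪f, expT A t (g : H)⟫‖ ^ 2) ∧
    ∑' g : G, ∫ t in Set.Ici (0:ℝ), ‖⟪f, expT A t (g : H)⟫‖ ^ 2
      ≤ (K * M ^ 2 * (∫ t in Set.Ici (0:ℝ), Real.exp (2 * ω * t))) * ‖f‖ ^ 2 := by
  set V := ∫ t in Set.Ici (0:ℝ), Real.exp (2 * ω * t) with hV
  have key : ∀ s : Finset G,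
      ∑ g ∈ s, ∫ t in Set.Ici (0:ℝ), ‖⟪f, expT A t (g : H)⟫‖ ^ 2
        ≤ (K * M ^ 2 * V) * ‖f‖ ^ 2 := by
    intro s
    have h1 : ∑ g ∈ s, ∫ t in Set.Ici (0:ℝ), ‖⟪f, expT A t (g : H)⟫‖ ^ 2
        = ∫ t in Set.Ici (0:ℝ), ∑ g ∈ s, ‖⟪f, expT A t (g : H)⟫‖ ^ 2 :=
      (integral_finset_sum s (fun g _ => int_h hst hM hω f g)).symm
    have h2 : ∫ t in Set.Ici (0:ℝ), ∑ g ∈ s, ‖⟪f, expT A t (g : H)⟫‖ ^ 2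
        ≤ ∫ t in Set.Ici (0:ℝ), (K * M ^ 2 * ‖f‖ ^ 2) * Real.exp (2 * ω * t) := by
      apply setIntegral_mono_on
      · exact integrable_finset_sum s (fun g _ => int_h hst hM hω f g)
      · exact (exp2_integrable hω).const_mul _
      · exact measurableSet_Ici
      · intro t ht
        have h3 := hB.finsum hK (expT A t) f s
        have h4 := normsq_expT_le hst hM (ht : (0:ℝ) ≤ t)
        have h5 : (0:ℝ) ≤ ‖f‖ ^ 2 := by positivity
        nlinarith [mul_le_mul_of_nonneg_left h4 (mul_nonneg hK h5)]
    have h6 : ∫ t in Set.Ici (0:ℝ), (K * M ^ 2 * ‖f‖ ^ 2) * Real.exp (2 * ω * t)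
        = (K * M ^ 2 * ‖f‖ ^ 2) * V := integral_const_mul _ _
    rw [h1]
    calc _ ≤ _ := h2
      _ = (K * M ^ 2 * ‖f‖ ^ 2) * V := h6
      _ = (K * M ^ 2 * V) * ‖f‖ ^ 2 := by ring
  have hnn : ∀ g : G, 0 ≤ ∫ t in Set.Ici (0:ℝ), ‖⟪f, expT A t (g : H)⟫‖ ^ 2 :=
    fun g => setIntegral_nonneg measurableSet_Ici (fun t _ => by positivity)
  exact ⟨summable_of_sum_le hnn key, Summable.tsum_le_of_sum_le (summable_of_sum_le hnn key) key⟩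

lemma summable_h_seq {A : H →L[ℂ] H} {M ω δ₀ : ℝ}
    (hst : ∀ u : ℝ, 0 ≤ u → ‖expT A u‖ ≤ M * Real.exp (ω * u))
    (hM : 0 ≤ M) (hω : ω < 0) (hδ₀ : 0 < δ₀) {t : ℕ → ℝ} (ht0 : ∀ j, 0 ≤ t j)
    (hlin : ∀ j : ℕ, (j : ℝ) * δ₀ ≤ t j) (f g : H) :
    Summable fun j : ℕ => ‖⟪f, expT A (t j) g⟫‖ ^ 2 := by
  have hr1 : Real.exp (2 * ω * δ₀) < 1 := by
    rw [Real.exp_lt_one_iff]; nlinarith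
  refine Summable.of_nonneg_of_le (fun j => by positivity) (fun j => ?_)
    ((summable_geometric_of_lt_one (Real.exp_nonneg _) hr1).mul_left ((M * ‖f‖ * ‖g‖) ^ 2))
  calc ‖⟪f, expT A (t j) g⟫‖ ^ 2 ≤ (M * ‖f‖ * ‖g‖) ^ 2 * Real.exp (2 * ω * (t j)) :=
          h_le hst hM f g (ht0 j)
      _ ≤ (M * ‖f‖ * ‖g‖) ^ 2 * Real.exp (2 * ω * δ₀) ^ j := by
        apply mul_le_mul_of_nonneg_left _ (by positivity)
        rw [← Real.exp_nat_mul]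
        apply Real.exp_le_exp.2
        have := hlin j
        nlinarith
end Chunk4
section Chunk5
variable {H : Type*} [NormedAddCommGroup H] [InnerProductSpace ℂ H] [CompleteSpace H]

lemma hbessel_zero {G : Set H} {C : ℝ} (hC : 0 ≤ C) :
    Summable (fun g : G => ‖⟪(0:H), (g : H)⟫‖ ^ 2) ∧
      ∑' g : G, ‖⟪(0:H), (g : H)⟫‖ ^ 2 ≤ C * ‖(0:H)‖ ^ 2 := by
  have h : (fun g : G => ‖⟪(0:H), (g : H)⟫‖ ^ 2) = fun _ => (0:ℝ) := by
    funext g; simp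
  rw [h]
  refine ⟨summable_zero, ?_⟩
  simp

lemma natFrame_HB {A : H →L[ℂ] H} {G : Set H} {M ω δ₀ c C : ℝ}
    (hst : ∀ u : ℝ, 0 ≤ u → ‖expT A u‖ ≤ M * Real.exp (ω * u))
    (hM : 0 ≤ M) (hω : ω < 0) (hδ₀ : 0 < δ₀) {t : ℕ → ℝ}
    (ht0 : ∀ j, 0 ≤ t j) (hlin : ∀ j : ℕ, (j : ℝ) * δ₀ ≤ t j) (htz : t 0 = 0)
    (hc : 0 < c) (hC : 0 ≤ C)
    (hfr : ∀ f : H,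
      c * ‖f‖ ^ 2 ≤ ∑' g : G, ∑' j : ℕ, ‖⟪f, expT A (t j) (g : H)⟫‖ ^ 2 ∧
      ∑' g : G, ∑' j : ℕ, ‖⟪f, expT A (t j) (g : H)⟫‖ ^ 2 ≤ C * ‖f‖ ^ 2) :
    HBessel G C := by
  intro f
  by_cases hf : f = 0
  · subst hf; exact hbessel_zero hC
  have hfn : 0 < ‖f‖ := norm_pos_iff.2 hf
  have hin : ∀ g : G, Summable fun j : ℕ => ‖⟪f, expT A (t j) (g : H)⟫‖ ^ 2 :=
    fun g => summable_h_seq hst hM hω hδ₀ ht0 hlin f g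
  have hout : Summable fun g : G => ∑' j : ℕ, ‖⟪f, expT A (t j) (g : H)⟫‖ ^ 2 := by
    by_contra hns
    have h2 := (hfr f).1
    rw [tsum_eq_zero_of_not_summable hns] at h2
    have hpos : (0:ℝ) < c * ‖f‖ ^ 2 := by positivity
    linarith
  have hle : ∀ g : G, ‖⟪f, (g : H)⟫‖ ^ 2 ≤ ∑' j : ℕ, ‖⟪f, expT A (t j) (g : H)⟫‖ ^ 2 := by
    intro g
    have h0 : ‖⟪f, (g : H)⟫‖ ^ 2 = ‖⟪f, expT A (t 0) (g : H)⟫‖ ^ 2 := by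
      rw [htz, expT_zero, ContinuousLinearMap.one_apply]
    rw [h0]
    exact Summable.le_tsum (hin g) 0 (fun j _ => by positivity)
  have hsum : Summable fun g : G => ‖⟪f, (g : H)⟫‖ ^ 2 :=
    Summable.of_nonneg_of_le (fun g => by positivity) hle hout
  exact ⟨hsum, (Summable.tsum_le_tsum hle hsum hout).trans (hfr f).2⟩

lemma semiCont_HB {A : H →L[ℂ] H} {G : Set H} {K M ω c : ℝ} (hGc : G.Countable)
    (hwB : ∀ f : H, ∑' g : G, ‖⟪f, (g : H)⟫‖ ^ 2 ≤ K * ‖f‖ ^ 2) (hK : 0 < K)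
    (hst : ∀ u : ℝ, 0 ≤ u → ‖expT A u‖ ≤ M * Real.exp (ω * u))
    (hM : 0 ≤ M) (hω : ω < 0) (hc : 0 < c)
    (hfr : ∀ f : H,
      c * ‖f‖ ^ 2 ≤ ∑' g : G, ∫ s in Set.Ici (0:ℝ), ‖⟪f, expT A s (g : H)⟫‖ ^ 2) :
    HBessel G K := by
  haveI := hGc.to_subtype
  intro f
  by_cases hf : f = 0
  · subst hf; exact hbessel_zero hK.le
  have hfn : 0 < ‖f‖ := norm_pos_iff.2 hf
  have hnnI : ∀ g : G, 0 ≤ ∫ s in Set.Ici (0:ℝ), ‖⟪f, expT A s (g : H)⟫‖ ^ 2 :=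
    fun g => setIntegral_nonneg measurableSet_Ici (fun s _ => by positivity)
  have hIsum : Summable fun g : G => ∫ s in Set.Ici (0:ℝ), ‖⟪f, expT A s (g : H)⟫‖ ^ 2 := by
    by_contra hns
    have h2 := hfr f
    rw [tsum_eq_zero_of_not_summable hns] at h2
    have hpos : (0:ℝ) < c * ‖f‖ ^ 2 := by positivity
    linarith
  have hmeas : ∀ g : G, Measurable fun s : ℝ => ENNReal.ofReal (‖⟪f, expT A s (g : H)⟫‖ ^ 2) :=
    fun g => (cont_h A f (g : H)).measurable.ennreal_ofReal
  have hlt : ∫⁻ s in Set.Ici (0:ℝ), (∑' g : G, ENNReal.ofReal (‖⟪f, expT A s (g : H)⟫‖ ^ 2)) < ⊤ := by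
    rw [lintegral_tsum (fun g => (hmeas g).aemeasurable)]
    have heq : ∀ g : G, ∫⁻ s in Set.Ici (0:ℝ), ENNReal.ofReal (‖⟪f, expT A s (g : H)⟫‖ ^ 2)
        = ENNReal.ofReal (∫ s in Set.Ici (0:ℝ), ‖⟪f, expT A s (g : H)⟫‖ ^ 2) := by
      intro g
      rw [← ofReal_integral_eq_lintegral_ofReal (int_h hst hM hω f (g : H))]
      filter_upwards with s using by positivity
    calc ∑' g : G, ∫⁻ s in Set.Ici (0:ℝ), ENNReal.ofReal (‖⟪f, expT A s (g : H)⟫‖ ^ 2)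
        = ∑' g : G, ENNReal.ofReal (∫ s in Set.Ici (0:ℝ), ‖⟪f, expT A s (g : H)⟫‖ ^ 2) :=
          tsum_congr heq
      _ = ENNReal.ofReal (∑' g : G, ∫ s in Set.Ici (0:ℝ), ‖⟪f, expT A s (g : H)⟫‖ ^ 2) :=
          (ENNReal.ofReal_tsum_of_nonneg hnnI hIsum).symm
      _ < ⊤ := ENNReal.ofReal_lt_top
  have hae : ∀ᵐ s ∂(volume.restrict (Set.Ici (0:ℝ))),
      (∑' g : G, ENNReal.ofReal (‖⟪f, expT A s (g : H)⟫‖ ^ 2)) < ⊤ :=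
    ae_lt_top (Measurable.ennreal_tsum hmeas) hlt.ne
  have hseq : ∀ n : ℕ, ∃ u : ℝ, 0 < u ∧ u < 1 / ((n : ℝ) + 1) ∧
      Summable fun g : G => ‖⟪f, expT A u (g : H)⟫‖ ^ 2 := by
    intro n
    by_contra hcon
    push_neg at hcon
    have hsub : Set.Ioo (0:ℝ) (1 / ((n : ℝ) + 1)) ⊆
        {s : ℝ | ¬ (∑' g : G, ENNReal.ofReal (‖⟪f, expT A s (g : H)⟫‖ ^ 2)) < ⊤} := by
      intro s hs
      simp only [Set.mem_setOf_eq, not_lt, top_le_iff]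
      by_contra hne
      have hsummable : Summable fun g : G => ‖⟪f, expT A s (g : H)⟫‖ ^ 2 := by
        have h3 := ENNReal.summable_toReal hne
        have h4 : (fun g : G => (ENNReal.ofReal (‖⟪f, expT A s (g : H)⟫‖ ^ 2)).toReal)
            = fun g : G => ‖⟪f, expT A s (g : H)⟫‖ ^ 2 := by
          funext g; rw [ENNReal.toReal_ofReal (by positivity)]
        rwa [h4] at h3
      exact (hcon s hs.1 hs.2) hsummable
    have h0 := ae_iff.1 hae
    have h5 : (volume.restrict (Set.Ici (0:ℝ))) (Set.Ioo (0:ℝ) (1 / ((n : ℝ) + 1))) = 0 :=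
      measure_mono_null hsub h0
    rw [Measure.restrict_apply measurableSet_Ioo] at h5
    have h6 : Set.Ioo (0:ℝ) (1 / ((n : ℝ) + 1)) ∩ Set.Ici 0 = Set.Ioo 0 (1 / ((n : ℝ) + 1)) :=
      Set.inter_eq_self_of_subset_left (fun x hx => le_of_lt hx.1)
    rw [h6, Real.volume_Ioo] at h5
    have h7 : (0:ℝ) < 1 / ((n : ℝ) + 1) := by positivity
    simp only [ENNReal.ofReal_eq_zero] at h5
    linarith
  choose u hu1 hu2 hu3 using hseq
  have hu0 : Filter.Tendsto u Filter.atTop (nhds 0) := by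
    have h1 : Filter.Tendsto (fun n : ℕ => 1 / ((n : ℝ) + 1)) Filter.atTop (nhds 0) :=
      tendsto_one_div_add_atTop_nhds_zero_nat
    exact squeeze_zero (fun n => (hu1 n).le) (fun n => (hu2 n).le) h1
  set w : ℕ → H := fun n => (ContinuousLinearMap.adjoint (expT A (u n))) f with hw
  have hwcont : Continuous fun s : ℝ => (ContinuousLinearMap.adjoint (expT A s)) f := by
    have h1 : Continuous fun s : ℝ => ContinuousLinearMap.adjoint (expT A s) :=
      (ContinuousLinearMap.adjoint : (H →L[ℂ] H) ≃ₗᵢ⋆[ℂ] (H →L[ℂ] H)).continuous.comp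
        (expT_cont A)
    exact ((ContinuousLinearMap.apply ℂ H f).continuous).comp h1
  have hwlim : Filter.Tendsto w Filter.atTop (nhds f) := by
    have h2 : (ContinuousLinearMap.adjoint (expT A 0)) f = f := by
      rw [expT_zero]
      rw [show (1 : H →L[ℂ] H) = ContinuousLinearMap.id ℂ H from rfl,
        ContinuousLinearMap.adjoint_id, ContinuousLinearMap.id_apply]
    have := (hwcont.tendsto 0).comp hu0
    rwa [h2] at this
  have hfin : ∀ s : Finset G, ∑ g ∈ s, ‖⟪f, (g : H)⟫‖ ^ 2 ≤ K * ‖f‖ ^ 2 := by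
    intro s
    have hterm : ∀ n : ℕ, ∑ g ∈ s, ‖⟪w n, (g : H)⟫‖ ^ 2 ≤ K * ‖w n‖ ^ 2 := by
      intro n
      have hws : Summable fun g : G => ‖⟪w n, (g : H)⟫‖ ^ 2 := by
        have h4 : (fun g : G => ‖⟪w n, (g : H)⟫‖ ^ 2)
            = fun g : G => ‖⟪f, expT A (u n) (g : H)⟫‖ ^ 2 := by
          funext g; rw [hw, ContinuousLinearMap.adjoint_inner_left]
        rw [h4]; exact hu3 n
      exact (Summable.sum_le_tsum s (fun _ _ => by positivity) hws).trans (hwB (w n))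
    have hcontsum : Continuous fun x : H => ∑ g ∈ s, ‖⟪x, (g : H)⟫‖ ^ 2 :=
      continuous_finset_sum s (fun g _ => ((continuous_id.inner continuous_const).norm.pow 2))
    have hL : Filter.Tendsto (fun n => ∑ g ∈ s, ‖⟪w n, (g : H)⟫‖ ^ 2) Filter.atTop
        (nhds (∑ g ∈ s, ‖⟪f, (g : H)⟫‖ ^ 2)) := (hcontsum.tendsto f).comp hwlim
    have hR : Filter.Tendsto (fun n => K * ‖w n‖ ^ 2) Filter.atTop (nhds (K * ‖f‖ ^ 2)) :=
      ((continuous_const.mul (continuous_norm.pow 2)).tendsto f).comp hwlim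
    exact le_of_tendsto_of_tendsto hL hR (Filter.Eventually.of_forall hterm)
  exact ⟨summable_of_sum_le (fun g => by positivity) hfin,
    Summable.tsum_le_of_sum_le (summable_of_sum_le (fun g => by positivity) hfin) hfin⟩
end Chunk5
section Chunk6
variable {H : Type*} [NormedAddCommGroup H] [InnerProductSpace ℂ H] [CompleteSpace H]

lemma cont_y (A : H →L[ℂ] H) (f g : H) (s : ℝ) :
    Continuous fun u : ℝ => ‖⟪f, (expT A u - expT A s) g⟫‖ ^ 2 := by
  have h1 : Continuous fun u : ℝ => (expT A u - expT A s) g := by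
    have : (fun u : ℝ => (expT A u - expT A s) g)
        = fun u : ℝ => expT A u g - expT A s g := by
      funext u; rw [ContinuousLinearMap.sub_apply]
    rw [this]
    exact (expT_apply_cont A g).sub continuous_const
  exact ((continuous_const.inner h1).norm.pow 2)

lemma eps_mono {nA u η : ℝ} (hnA : 0 ≤ nA) (hu : 0 ≤ u) (h : u ≤ η) :
    u * nA * Real.exp (u * nA) ≤ η * nA * Real.exp (η * nA) := by
  have h1 : u * nA ≤ η * nA := mul_le_mul_of_nonneg_right h hnA
  have h2 : Real.exp (u * nA) ≤ Real.exp (η * nA) := Real.exp_le_exp.2 h1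
  have h3 : 0 ≤ η * nA := le_trans (mul_nonneg hu hnA) h1
  exact mul_le_mul h1 h2 (Real.exp_pos _).le h3

lemma natFrame_semiCont {A : H →L[ℂ] H} {G : Set H} {K M ω m c C : ℝ}
    (hB : HBessel G K) (hK : 0 < K) (hM : 1 ≤ M) (hω : ω < 0)
    (hst : ∀ u : ℝ, 0 ≤ u → ‖expT A u‖ ≤ M * Real.exp (ω * u))
    (hm : 0 < m) (hc : 0 < c) (hC : 0 < C)
    (hfr : ∀ f : H,
      c * ‖f‖ ^ 2 ≤ ∑' g : G, ∑' j : ℕ, ‖⟪f, expT A ((j:ℝ) * m) (g : H)⟫‖ ^ 2 ∧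
      ∑' g : G, ∑' j : ℕ, ‖⟪f, expT A ((j:ℝ) * m) (g : H)⟫‖ ^ 2 ≤ C * ‖f‖ ^ 2) :
    SemiContFrame A G (Set.Ici 0) := by
  have hM0 : (0:ℝ) ≤ M := by linarith
  set V := ∫ u in Set.Ici (0:ℝ), Real.exp (2 * ω * u) with hVdef
  have hV : 0 < V := V_pos hω
  set nA := ‖A‖ with hnA
  have hnA0 : (0:ℝ) ≤ nA := norm_nonneg A
  set r := Real.exp (2 * ω * m) with hrdef
  have hr0 : (0:ℝ) ≤ r := (Real.exp_pos _).le
  have hr1 : r < 1 := by rw [hrdef, Real.exp_lt_one_iff]; nlinarith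
  have hgeom : Summable fun j : ℕ => r ^ j := summable_geometric_of_lt_one hr0 hr1
  set R := ∑' j : ℕ, r ^ j with hRdef
  have hR1 : (1:ℝ) ≤ R := by
    have := Summable.le_tsum hgeom 0 (fun j _ => by positivity)
    simpa using this
  set q : ℝ → ℝ := fun η => K * M ^ 2 * (η * nA * Real.exp (η * nA)) ^ 2 * R with hqdef
  have hq0 : q 0 = 0 := by simp [hqdef]
  have hqc : Continuous q := by
    apply Continuous.mul (Continuous.mul continuous_const ?_) continuous_const
    exact ((continuous_id.mul continuous_const).mul
      ((continuous_id.mul continuous_const).rexp)).pow 2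
  obtain ⟨η, hqη, hη0, hηm⟩ :
      ∃ η : ℝ, q η < c / 4 ∧ 0 < η ∧ η ≤ m := by
    have h1 : Filter.Tendsto q (nhdsWithin 0 (Set.Ioi 0)) (nhds 0) := by
      have := (hqc.tendsto 0).mono_left (nhdsWithin_le_nhds (s := Set.Ioi (0:ℝ)))
      rwa [hq0] at this
    have h2 : ∀ᶠ η in nhdsWithin 0 (Set.Ioi 0), q η < c / 4 :=
      h1.eventually (eventually_lt_nhds (by linarith))
    have h3 : ∀ᶠ η in nhdsWithin 0 (Set.Ioi 0), η ∈ Set.Ioc 0 m :=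
      Filter.eventually_of_mem (Ioc_mem_nhdsGT_of_mem ⟨le_refl 0, hm⟩) (fun x hx => hx)
    obtain ⟨η, h4, h5⟩ := (h2.and h3).exists
    exact ⟨η, h4, h5.1, h5.2⟩
  set εA := η * nA * Real.exp (η * nA) with hεA
  have hεA0 : 0 ≤ εA := by positivity
  have hMsq : (0:ℝ) < M ^ 2 := by nlinarith
  refine ⟨η * c / 4, by have := mul_pos hη0 hc; linarith,
    K * M ^ 2 * V, mul_pos (mul_pos hK hMsq) hV, fun f => ?_⟩
  have hPhi := Phi_bound hB hK.le hM0 hω hst f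
  constructor
  · -- lower bound
    by_cases hf : f = 0
    · subst hf
      simp only [norm_zero]
      rw [show ((0:ℝ)^2) = 0 by norm_num, mul_zero]
      exact tsum_nonneg (fun g => setIntegral_nonneg measurableSet_Ici (fun u _ => by positivity))
    have hfn : 0 < ‖f‖ := norm_pos_iff.2 hf
    have hin : ∀ g : G, Summable fun j : ℕ => ‖⟪f, expT A ((j:ℝ) * m) (g : H)⟫‖ ^ 2 := by
      intro g
      exact summable_h_seq hst hM0 hω hm (fun j => by positivity)
        (fun j => le_refl _) f (g : H)
    have hout : Summable fun g : G => ∑' j : ℕ, ‖⟪f, expT A ((j:ℝ) * m) (g : H)⟫‖ ^ 2 := by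
      by_contra hns
      have h2 := (hfr f).1
      rw [tsum_eq_zero_of_not_summable hns] at h2
      have hpos : (0:ℝ) < c * ‖f‖ ^ 2 := by positivity
      linarith
    -- main finite estimate
    have claim : ∀ (s : Finset G) (N : ℕ),
        (η / 2) * (∑ g ∈ s, ∑ j ∈ Finset.range N, ‖⟪f, expT A ((j:ℝ) * m) (g : H)⟫‖ ^ 2)
          - η * (c / 4) * ‖f‖ ^ 2
        ≤ ∑ g ∈ s, ∫ u in Set.Ici (0:ℝ), ‖⟪f, expT A u (g : H)⟫‖ ^ 2 := by
      intro s N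
      set E : ℕ → Set ℝ := fun j => Set.Ico ((j:ℝ) * m) ((j:ℝ) * m + η) with hE
      have hEsub : ∀ j : ℕ, E j ⊆ Set.Ici (0:ℝ) := by
        intro j u hu
        have : (0:ℝ) ≤ (j:ℝ) * m := by positivity
        exact le_trans this hu.1
      have hEmeas : ∀ j : ℕ, MeasurableSet (E j) := fun j => measurableSet_Ico
      have hEdisj : Set.Pairwise ↑(Finset.range N) (Function.onFun Disjoint E) := by
        intro i _ j _ hij
        have key : ∀ i j : ℕ, i < j → Disjoint (E i) (E j) := by
          intro i j h
          rw [hE]; rw [Set.Ico_disjoint_Ico]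
          have h1 : ((i:ℝ) + 1) ≤ (j:ℝ) := by exact_mod_cast h
          have h2 : (i:ℝ) * m + η ≤ (j:ℝ) * m := by
            nlinarith [mul_le_mul_of_nonneg_right h1 hm.le]
          calc min ((i:ℝ) * m + η) ((j:ℝ) * m + η) ≤ (i:ℝ) * m + η := min_le_left _ _
            _ ≤ (j:ℝ) * m := h2
            _ ≤ max ((i:ℝ) * m) ((j:ℝ) * m) := le_max_right _ _
        rcases hij.lt_or_gt with h | h
        · exact key i j h
        · exact (key j i h).symm
      have hintE : ∀ (g : G) (j : ℕ),
          IntegrableOn (fun u => ‖⟪f, expT A u (g : H)⟫‖ ^ 2) (E j) :=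
        fun g j => (int_h hst hM0 hω f (g : H)).mono_set (hEsub j)
      -- Step A
      have stepA : ∀ g : G, ∑ j ∈ Finset.range N, ∫ u in E j, ‖⟪f, expT A u (g : H)⟫‖ ^ 2
          ≤ ∫ u in Set.Ici (0:ℝ), ‖⟪f, expT A u (g : H)⟫‖ ^ 2 := by
        intro g
        rw [← integral_biUnion_finset (Finset.range N) (fun j _ => hEmeas j) hEdisj
          (fun j _ => hintE g j)]
        apply setIntegral_mono_set (int_h hst hM0 hω f (g : H))
        · filter_upwards with u using by positivity
        · exact (Set.iUnion₂_subset fun j _ => hEsub j).eventuallyLE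
      -- Step B
      have stepB : ∀ (g : G) (j : ℕ),
          η * (‖⟪f, expT A ((j:ℝ) * m) (g : H)⟫‖ ^ 2 / 2)
            - (∫ u in E j, ‖⟪f, (expT A u - expT A ((j:ℝ) * m)) (g : H)⟫‖ ^ 2)
          ≤ ∫ u in E j, ‖⟪f, expT A u (g : H)⟫‖ ^ 2 := by
        intro g j
        have hyint : IntegrableOn
            (fun u => ‖⟪f, (expT A u - expT A ((j:ℝ) * m)) (g : H)⟫‖ ^ 2) (E j) :=
          ((cont_y A f (g : H) ((j:ℝ) * m)).integrableOn_Icc).mono_set Set.Ico_subset_Icc_self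
        have hconst : IntegrableOn
            (fun _ : ℝ => ‖⟪f, expT A ((j:ℝ) * m) (g : H)⟫‖ ^ 2 / 2) (E j) := by
          refine integrableOn_const ?_
          rw [hE, Real.volume_Ico]
          exact ENNReal.ofReal_ne_top
        have hptwise : ∀ u ∈ E j,
            ‖⟪f, expT A ((j:ℝ) * m) (g : H)⟫‖ ^ 2 / 2
              - ‖⟪f, (expT A u - expT A ((j:ℝ) * m)) (g : H)⟫‖ ^ 2
            ≤ ‖⟪f, expT A u (g : H)⟫‖ ^ 2 := by
          intro u _
          have htri : ‖⟪f, expT A ((j:ℝ) * m) (g : H)⟫‖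
              ≤ ‖⟪f, expT A u (g : H)⟫‖
                + ‖⟪f, (expT A u - expT A ((j:ℝ) * m)) (g : H)⟫‖ := by
            have heq : ⟪f, expT A ((j:ℝ) * m) (g : H)⟫
                = ⟪f, expT A u (g : H)⟫
                  - ⟪f, (expT A u - expT A ((j:ℝ) * m)) (g : H)⟫ := by
              rw [ContinuousLinearMap.sub_apply, inner_sub_right]
              ring
            rw [heq]
            exact norm_sub_le _ _
          have := sq_lower (norm_nonneg ⟪f, expT A u (g : H)⟫)
            (norm_nonneg ⟪f, (expT A u - expT A ((j:ℝ) * m)) (g : H)⟫) htri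
            (norm_nonneg _)
          linarith
        have h1 : ∫ u in E j,
            (‖⟪f, expT A ((j:ℝ) * m) (g : H)⟫‖ ^ 2 / 2
              - ‖⟪f, (expT A u - expT A ((j:ℝ) * m)) (g : H)⟫‖ ^ 2)
            ≤ ∫ u in E j, ‖⟪f, expT A u (g : H)⟫‖ ^ 2 := by
          apply setIntegral_mono_on (hconst.sub hyint) (hintE g j) (hEmeas j) hptwise
        have h2 : ∫ u in E j,
            (‖⟪f, expT A ((j:ℝ) * m) (g : H)⟫‖ ^ 2 / 2
              - ‖⟪f, (expT A u - expT A ((j:ℝ) * m)) (g : H)⟫‖ ^ 2)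
            = η * (‖⟪f, expT A ((j:ℝ) * m) (g : H)⟫‖ ^ 2 / 2)
              - ∫ u in E j, ‖⟪f, (expT A u - expT A ((j:ℝ) * m)) (g : H)⟫‖ ^ 2 := by
          rw [integral_sub hconst hyint]
          congr 1
          rw [setIntegral_const, hE, Real.volume_real_Ico, smul_eq_mul]
          rw [show (j:ℝ) * m + η - (j:ℝ) * m = η by ring, max_eq_left hη0.le]
        rw [← h2]
        exact h1
      -- Step C
      have stepC : ∀ j : ℕ,
          ∑ g ∈ s, ∫ u in E j, ‖⟪f, (expT A u - expT A ((j:ℝ) * m)) (g : H)⟫‖ ^ 2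
          ≤ η * (K * M ^ 2 * εA ^ 2 * r ^ j * ‖f‖ ^ 2) := by
        intro j
        have hyint : ∀ g : G, IntegrableOn
            (fun u => ‖⟪f, (expT A u - expT A ((j:ℝ) * m)) (g : H)⟫‖ ^ 2) (E j) :=
          fun g => ((cont_y A f (g : H) ((j:ℝ) * m)).integrableOn_Icc).mono_set
            Set.Ico_subset_Icc_self
        have h1 : ∑ g ∈ s, ∫ u in E j, ‖⟪f, (expT A u - expT A ((j:ℝ) * m)) (g : H)⟫‖ ^ 2
            = ∫ u in E j, ∑ g ∈ s, ‖⟪f, (expT A u - expT A ((j:ℝ) * m)) (g : H)⟫‖ ^ 2 :=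
          (integral_finset_sum s (fun g _ => hyint g)).symm
        have hptwise : ∀ u ∈ E j,
            ∑ g ∈ s, ‖⟪f, (expT A u - expT A ((j:ℝ) * m)) (g : H)⟫‖ ^ 2
            ≤ K * M ^ 2 * εA ^ 2 * r ^ j * ‖f‖ ^ 2 := by
          intro u hu
          have hjm0 : (0:ℝ) ≤ (j:ℝ) * m := by positivity
          have hΔ : ‖expT A u - expT A ((j:ℝ) * m)‖
              ≤ M * Real.exp (ω * ((j:ℝ) * m)) * εA := by
            have h3 := expT_sub_norm A hst hjm0 hu.1
            have h4 : (u - (j:ℝ) * m) * ‖A‖ * Real.exp ((u - (j:ℝ) * m) * ‖A‖) ≤ εA := by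
              rw [hεA, hnA]
              exact eps_mono (norm_nonneg A) (by linarith [hu.1]) (by linarith [hu.2])
            calc ‖expT A u - expT A ((j:ℝ) * m)‖
                ≤ M * Real.exp (ω * ((j:ℝ) * m))
                  * ((u - (j:ℝ) * m) * ‖A‖ * Real.exp ((u - (j:ℝ) * m) * ‖A‖)) := h3
              _ ≤ M * Real.exp (ω * ((j:ℝ) * m)) * εA := by
                  apply mul_le_mul_of_nonneg_left h4 (by positivity)
          have h5 := hB.finsum hK.le (expT A u - expT A ((j:ℝ) * m)) f s
          have h6 : ‖expT A u - expT A ((j:ℝ) * m)‖ ^ 2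
              ≤ M ^ 2 * r ^ j * εA ^ 2 := by
            have h7 : Real.exp (ω * ((j:ℝ) * m)) ^ 2 = r ^ j := by
              rw [hrdef, ← Real.exp_nat_mul, ← Real.exp_nat_mul]
              congr 1
              push_cast
              ring
            calc ‖expT A u - expT A ((j:ℝ) * m)‖ ^ 2
                ≤ (M * Real.exp (ω * ((j:ℝ) * m)) * εA) ^ 2 :=
                  pow_le_pow_left₀ (norm_nonneg _) hΔ 2
              _ = M ^ 2 * Real.exp (ω * ((j:ℝ) * m)) ^ 2 * εA ^ 2 := by ring
              _ = M ^ 2 * r ^ j * εA ^ 2 := by rw [h7]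
          calc ∑ g ∈ s, ‖⟪f, (expT A u - expT A ((j:ℝ) * m)) (g : H)⟫‖ ^ 2
              ≤ K * (‖expT A u - expT A ((j:ℝ) * m)‖ ^ 2 * ‖f‖ ^ 2) := h5
            _ ≤ K * (M ^ 2 * r ^ j * εA ^ 2 * ‖f‖ ^ 2) := by
                apply mul_le_mul_of_nonneg_left _ hK.le
                apply mul_le_mul_of_nonneg_right h6 (by positivity)
            _ = K * M ^ 2 * εA ^ 2 * r ^ j * ‖f‖ ^ 2 := by ring
        have hconstInt : IntegrableOn
            (fun _ : ℝ => K * M ^ 2 * εA ^ 2 * r ^ j * ‖f‖ ^ 2) (E j) := by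
          refine integrableOn_const ?_
          rw [hE, Real.volume_Ico]
          exact ENNReal.ofReal_ne_top
        have h8 : ∫ u in E j, ∑ g ∈ s, ‖⟪f, (expT A u - expT A ((j:ℝ) * m)) (g : H)⟫‖ ^ 2
            ≤ ∫ _ in E j, K * M ^ 2 * εA ^ 2 * r ^ j * ‖f‖ ^ 2 := by
          apply setIntegral_mono_on (integrable_finset_sum s (fun g _ => hyint g))
            hconstInt (hEmeas j) hptwise
        have h9 : (∫ _ in E j, K * M ^ 2 * εA ^ 2 * r ^ j * ‖f‖ ^ 2)
            = η * (K * M ^ 2 * εA ^ 2 * r ^ j * ‖f‖ ^ 2) := by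
          rw [setIntegral_const, hE, Real.volume_real_Ico, smul_eq_mul,
            show (j:ℝ) * m + η - (j:ℝ) * m = η by ring, max_eq_left hη0.le]
        rw [h1]
        rw [h9] at h8
        exact h8
      -- combine
      have hsum1 : ∑ g ∈ s, ∑ j ∈ Finset.range N,
          (η * (‖⟪f, expT A ((j:ℝ) * m) (g : H)⟫‖ ^ 2 / 2)
            - ∫ u in E j, ‖⟪f, (expT A u - expT A ((j:ℝ) * m)) (g : H)⟫‖ ^ 2)
          ≤ ∑ g ∈ s, ∫ u in Set.Ici (0:ℝ), ‖⟪f, expT A u (g : H)⟫‖ ^ 2 := by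
        apply Finset.sum_le_sum
        intro g _
        calc ∑ j ∈ Finset.range N, (η * (‖⟪f, expT A ((j:ℝ) * m) (g : H)⟫‖ ^ 2 / 2)
              - ∫ u in E j, ‖⟪f, (expT A u - expT A ((j:ℝ) * m)) (g : H)⟫‖ ^ 2)
            ≤ ∑ j ∈ Finset.range N, ∫ u in E j, ‖⟪f, expT A u (g : H)⟫‖ ^ 2 :=
              Finset.sum_le_sum (fun j _ => stepB g j)
          _ ≤ ∫ u in Set.Ici (0:ℝ), ‖⟪f, expT A u (g : H)⟫‖ ^ 2 := stepA g
      have hgeoN : ∑ j ∈ Finset.range N, r ^ j ≤ R :=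
        Summable.sum_le_tsum (Finset.range N) (fun j _ => by positivity) hgeom
      have hsum2 : ∑ j ∈ Finset.range N, ∑ g ∈ s,
          ∫ u in E j, ‖⟪f, (expT A u - expT A ((j:ℝ) * m)) (g : H)⟫‖ ^ 2
          ≤ η * (c / 4) * ‖f‖ ^ 2 := by
        calc ∑ j ∈ Finset.range N, ∑ g ∈ s,
            ∫ u in E j, ‖⟪f, (expT A u - expT A ((j:ℝ) * m)) (g : H)⟫‖ ^ 2
            ≤ ∑ j ∈ Finset.range N, η * (K * M ^ 2 * εA ^ 2 * r ^ j * ‖f‖ ^ 2) :=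
              Finset.sum_le_sum (fun j _ => stepC j)
          _ = η * (K * M ^ 2 * εA ^ 2 * ‖f‖ ^ 2) * ∑ j ∈ Finset.range N, r ^ j := by
              rw [Finset.mul_sum]
              apply Finset.sum_congr rfl
              intro j _; ring
          _ ≤ η * (K * M ^ 2 * εA ^ 2 * ‖f‖ ^ 2) * R := by
              apply mul_le_mul_of_nonneg_left hgeoN
              apply mul_nonneg hη0.le
              apply mul_nonneg (mul_nonneg (mul_nonneg hK.le (sq_nonneg M)) (sq_nonneg εA))
                (sq_nonneg ‖f‖)
          _ = η * (q η * ‖f‖ ^ 2) := by rw [hqdef]; ring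
          _ ≤ η * ((c / 4) * ‖f‖ ^ 2) := by
              apply mul_le_mul_of_nonneg_left _ hη0.le
              apply mul_le_mul_of_nonneg_right hqη.le (by positivity)
          _ = η * (c / 4) * ‖f‖ ^ 2 := by ring
      have hexpand : ∑ g ∈ s, ∑ j ∈ Finset.range N,
          (η * (‖⟪f, expT A ((j:ℝ) * m) (g : H)⟫‖ ^ 2 / 2)
            - ∫ u in E j, ‖⟪f, (expT A u - expT A ((j:ℝ) * m)) (g : H)⟫‖ ^ 2)
          = (η / 2) * (∑ g ∈ s, ∑ j ∈ Finset.range N,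
              ‖⟪f, expT A ((j:ℝ) * m) (g : H)⟫‖ ^ 2)
            - ∑ j ∈ Finset.range N, ∑ g ∈ s,
              ∫ u in E j, ‖⟪f, (expT A u - expT A ((j:ℝ) * m)) (g : H)⟫‖ ^ 2 := by
        simp only [Finset.sum_sub_distrib]
        congr 1
        · rw [Finset.mul_sum]
          apply Finset.sum_congr rfl
          intro g _
          rw [Finset.mul_sum]
          apply Finset.sum_congr rfl
          intro j _
          ring
        · exact Finset.sum_comm
      have := hsum1
      rw [hexpand] at this
      linarith [hsum2, this]
    -- pass to the limit
    have hstep : ∀ ε : ℝ, 0 < ε →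
        (η * c / 4) * ‖f‖ ^ 2 - ε
          ≤ ∑' g : G, ∫ u in Set.Ici (0:ℝ), ‖⟪f, expT A u (g : H)⟫‖ ^ 2 := by
      intro ε hε
      obtain ⟨s, N, hsN⟩ := double_sum_approx (a := fun (g : G) (j : ℕ) =>
        ‖⟪f, expT A ((j:ℝ) * m) (g : H)⟫‖ ^ 2) (fun g j => by positivity) hin hout
        (ε := 2 * ε / η) (div_pos (by linarith) hη0)
      have h5 := claim s N
      have h6 : ∑ g ∈ s, ∫ u in Set.Ici (0:ℝ), ‖⟪f, expT A u (g : H)⟫‖ ^ 2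
          ≤ ∑' g : G, ∫ u in Set.Ici (0:ℝ), ‖⟪f, expT A u (g : H)⟫‖ ^ 2 :=
        Summable.sum_le_tsum s (fun g _ => setIntegral_nonneg measurableSet_Ici
          (fun u _ => by positivity)) hPhi.1
      have hT := (hfr f).1
      have h7 : c * ‖f‖ ^ 2 - 2 * ε / η
          ≤ ∑ g ∈ s, ∑ j ∈ Finset.range N, ‖⟪f, expT A ((j:ℝ) * m) (g : H)⟫‖ ^ 2 := by
        linarith
      have h8 : (η / 2) * (c * ‖f‖ ^ 2 - 2 * ε / η)
          ≤ (η / 2) * (∑ g ∈ s, ∑ j ∈ Finset.range N,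
            ‖⟪f, expT A ((j:ℝ) * m) (g : H)⟫‖ ^ 2) :=
        mul_le_mul_of_nonneg_left h7 (by linarith)
      have h10 : (η / 2) * (c * ‖f‖ ^ 2 - 2 * ε / η) = η * c / 2 * ‖f‖ ^ 2 - ε := by
        field_simp
      rw [h10] at h8
      nlinarith [h5, h6, h8]
    have := le_of_forall_sub_le hstep
    linarith [this]
  · -- upper bound
    calc ∑' g : G, ∫ u in Set.Ici (0:ℝ), ‖⟪f, expT A u (g : H)⟫‖ ^ 2
        ≤ (K * M ^ 2 * V) * ‖f‖ ^ 2 := hPhi.2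
      _ = K * M ^ 2 * V * ‖f‖ ^ 2 := by ring
end Chunk6
section Chunk7
variable {H : Type*} [NormedAddCommGroup H] [InnerProductSpace ℂ H] [CompleteSpace H]

lemma semiCont_natFrame {A : H →L[ℂ] H} {G : Set H} {K M ω c C : ℝ}
    (hB : HBessel G K) (hK : 0 < K) (hM : 1 ≤ M) (hω : ω < 0)
    (hst : ∀ u : ℝ, 0 ≤ u → ‖expT A u‖ ≤ M * Real.exp (ω * u))
    (hc : 0 < c) (hC : 0 < C)
    (hfr : ∀ f : H,
      c * ‖f‖ ^ 2 ≤ ∑' g : G, ∫ u in Set.Ici (0:ℝ), ‖⟪f, expT A u (g : H)⟫‖ ^ 2 ∧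
      ∑' g : G, ∫ u in Set.Ici (0:ℝ), ‖⟪f, expT A u (g : H)⟫‖ ^ 2 ≤ C * ‖f‖ ^ 2) :
    ∃ δ > (0 : ℝ), ∀ t : ℕ → ℝ,
      t 0 = 0 → StrictMono t →
      (∃ δ₀ > (0 : ℝ), ∀ j : ℕ, δ₀ ≤ t (j + 1) - t j) →
      (∀ j : ℕ, t (j + 1) - t j < δ) →
      NatTimeFrame A G t := by
  have hM0 : (0:ℝ) ≤ M := by linarith
  have hMsq : (0:ℝ) < M ^ 2 := by nlinarith
  set V := ∫ u in Set.Ici (0:ℝ), Real.exp (2 * ω * u) with hVdef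
  have hV : 0 < V := V_pos hω
  set nA := ‖A‖ with hnA
  set q : ℝ → ℝ := fun δ =>
    (2 * K * M ^ 2 * (δ * nA * Real.exp (δ * nA)) ^ 2 * Real.exp (-(2 * ω * δ))) * V
    with hqdef
  have hq0 : q 0 = 0 := by simp [hqdef]
  have hqc : Continuous q := by
    apply Continuous.mul _ continuous_const
    apply Continuous.mul
    · exact continuous_const.mul
        (((continuous_id.mul continuous_const).mul
          ((continuous_id.mul continuous_const).rexp)).pow 2)
    · exact (((continuous_const.mul continuous_id).neg)).rexp
  obtain ⟨δ, hqδ, hδ0⟩ : ∃ δ : ℝ, q δ < c / 2 ∧ 0 < δ := by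
    have h1 : Filter.Tendsto q (nhdsWithin 0 (Set.Ioi 0)) (nhds 0) := by
      have := (hqc.tendsto 0).mono_left (nhdsWithin_le_nhds (s := Set.Ioi (0:ℝ)))
      rwa [hq0] at this
    have h2 : ∀ᶠ δ in nhdsWithin 0 (Set.Ioi 0), q δ < c / 2 :=
      h1.eventually (eventually_lt_nhds (by linarith))
    have h3 : ∀ᶠ δ in nhdsWithin 0 (Set.Ioi 0), δ ∈ Set.Ioi (0:ℝ) :=
      Filter.eventually_of_mem self_mem_nhdsWithin (fun x hx => hx)
    obtain ⟨δ, h4, h5⟩ := (h2.and h3).exists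
    exact ⟨δ, h4, h5⟩
  set εδ := δ * nA * Real.exp (δ * nA) with hεδ
  have hεδ0 : 0 ≤ εδ := by positivity
  set Cδ := 2 * K * M ^ 2 * εδ ^ 2 * Real.exp (-(2 * ω * δ)) with hCδ
  have hCδ0 : 0 ≤ Cδ := by positivity
  have hqeq : q δ = Cδ * V := by rw [hqdef, hCδ, hεδ]
  refine ⟨δ, hδ0, ?_⟩
  rintro t htz htm ⟨δ₀, hδ₀, hgap⟩ hlt
  have ht0 : ∀ j, 0 ≤ t j := by
    intro j
    have := htm.monotone (Nat.zero_le j)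
    rw [htz] at this
    exact this
  have hlin : ∀ j : ℕ, (j : ℝ) * δ₀ ≤ t j := tj_ge htz hgap
  set r₀ := Real.exp (2 * ω * δ₀) with hr₀def
  have hr₀0 : (0:ℝ) ≤ r₀ := (Real.exp_pos _).le
  have hr₀1 : r₀ < 1 := by rw [hr₀def, Real.exp_lt_one_iff]; nlinarith
  have hgeom : Summable fun j : ℕ => r₀ ^ j := summable_geometric_of_lt_one hr₀0 hr₀1
  set R₀ := ∑' j : ℕ, r₀ ^ j with hR₀def
  have hR₀1 : (1:ℝ) ≤ R₀ := by
    have := Summable.le_tsum hgeom 0 (fun j _ => by positivity)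
    simpa using this
  refine ⟨c / (4 * δ), div_pos hc (by linarith), K * M ^ 2 * R₀,
    mul_pos (mul_pos hK hMsq) (by linarith), fun f => ?_⟩
  have hin : ∀ g : G, Summable fun j : ℕ => ‖⟪f, expT A (t j) (g : H)⟫‖ ^ 2 :=
    fun g => summable_h_seq hst hM0 hω hδ₀ ht0 hlin f (g : H)
  -- upper bound
  have hbound : ∀ s : Finset G,
      ∑ g ∈ s, ∑' j : ℕ, ‖⟪f, expT A (t j) (g : H)⟫‖ ^ 2
        ≤ K * M ^ 2 * R₀ * ‖f‖ ^ 2 := by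
    intro s
    have hswap : ∑ g ∈ s, ∑' j : ℕ, ‖⟪f, expT A (t j) (g : H)⟫‖ ^ 2
        = ∑' j : ℕ, ∑ g ∈ s, ‖⟪f, expT A (t j) (g : H)⟫‖ ^ 2 :=
      (Summable.tsum_finsetSum (fun g _ => hin g)).symm
    have hperj : ∀ j : ℕ, ∑ g ∈ s, ‖⟪f, expT A (t j) (g : H)⟫‖ ^ 2
        ≤ (K * M ^ 2 * ‖f‖ ^ 2) * r₀ ^ j := by
      intro j
      have h3 := hB.finsum hK.le (expT A (t j)) f s
      have h4 := normsq_expT_le hst hM0 (ht0 j)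
      have h5 : Real.exp (2 * ω * t j) ≤ r₀ ^ j := by
        rw [hr₀def, ← Real.exp_nat_mul]
        apply Real.exp_le_exp.2
        have := hlin j
        nlinarith
      have h6 : (0:ℝ) ≤ ‖f‖ ^ 2 := sq_nonneg _
      calc ∑ g ∈ s, ‖⟪f, expT A (t j) (g : H)⟫‖ ^ 2
          ≤ K * (‖expT A (t j)‖ ^ 2 * ‖f‖ ^ 2) := h3
        _ ≤ K * (M ^ 2 * Real.exp (2 * ω * t j) * ‖f‖ ^ 2) := by
            apply mul_le_mul_of_nonneg_left _ hK.le
            exact mul_le_mul_of_nonneg_right h4 h6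
        _ ≤ K * (M ^ 2 * r₀ ^ j * ‖f‖ ^ 2) := by
            apply mul_le_mul_of_nonneg_left _ hK.le
            apply mul_le_mul_of_nonneg_right _ h6
            exact mul_le_mul_of_nonneg_left h5 (by positivity)
        _ = (K * M ^ 2 * ‖f‖ ^ 2) * r₀ ^ j := by ring
    have hsl : Summable fun j : ℕ => ∑ g ∈ s, ‖⟪f, expT A (t j) (g : H)⟫‖ ^ 2 :=
      summable_sum (fun g _ => hin g)
    have hsr : Summable fun j : ℕ => (K * M ^ 2 * ‖f‖ ^ 2) * r₀ ^ j := hgeom.mul_left _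
    calc ∑ g ∈ s, ∑' j : ℕ, ‖⟪f, expT A (t j) (g : H)⟫‖ ^ 2
        = ∑' j : ℕ, ∑ g ∈ s, ‖⟪f, expT A (t j) (g : H)⟫‖ ^ 2 := hswap
      _ ≤ ∑' j : ℕ, (K * M ^ 2 * ‖f‖ ^ 2) * r₀ ^ j := Summable.tsum_le_tsum hperj hsl hsr
      _ = (K * M ^ 2 * ‖f‖ ^ 2) * R₀ := tsum_mul_left
      _ = K * M ^ 2 * R₀ * ‖f‖ ^ 2 := by ring
  have hΨnn : ∀ g : G, 0 ≤ ∑' j : ℕ, ‖⟪f, expT A (t j) (g : H)⟫‖ ^ 2 :=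
    fun g => tsum_nonneg (fun j => by positivity)
  have hΨsum : Summable fun g : G => ∑' j : ℕ, ‖⟪f, expT A (t j) (g : H)⟫‖ ^ 2 :=
    summable_of_sum_le hΨnn hbound
  have hupper : ∑' g : G, ∑' j : ℕ, ‖⟪f, expT A (t j) (g : H)⟫‖ ^ 2
      ≤ K * M ^ 2 * R₀ * ‖f‖ ^ 2 := Summable.tsum_le_of_sum_le hΨsum hbound
  refine ⟨?_, hupper⟩
  -- lower bound
  by_cases hf : f = 0
  · subst hf
    simp only [norm_zero]
    rw [show ((0:ℝ)^2) = 0 by norm_num, mul_zero]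
    exact tsum_nonneg hΨnn
  have hfn : 0 < ‖f‖ := norm_pos_iff.2 hf
  have hIsum : Summable fun g : G => ∫ u in Set.Ici (0:ℝ), ‖⟪f, expT A u (g : H)⟫‖ ^ 2 := by
    by_contra hns
    have h2 := (hfr f).1
    rw [tsum_eq_zero_of_not_summable hns] at h2
    have hpos : (0:ℝ) < c * ‖f‖ ^ 2 := by positivity
    linarith
  have hub : ∀ x : ℝ, ∃ j : ℕ, x < t j := by
    intro x
    obtain ⟨n, hn⟩ := exists_nat_gt (x / δ₀)
    exact ⟨n, by
      have h1 := hlin n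
      have h2 : x < (n:ℝ) * δ₀ := by
        rw [div_lt_iff₀ hδ₀] at hn
        linarith
      linarith⟩
  have hpart : Set.Ici (0:ℝ) = ⋃ j, Set.Ico (t j) (t (j + 1)) := partition_Ici htz htm hub
  set E : ℕ → Set ℝ := fun j => Set.Ico (t j) (t (j + 1)) with hE
  have hEmeas : ∀ j, MeasurableSet (E j) := fun j => measurableSet_Ico
  have hEdisj : Pairwise (Function.onFun Disjoint E) := by
    intro i j hij
    have key : ∀ i j : ℕ, i < j → Disjoint (E i) (E j) := by
      intro i j h
      rw [hE]
      simp only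
      rw [Set.Ico_disjoint_Ico]
      have h1 : t (i + 1) ≤ t j := htm.monotone (by omega)
      calc min (t (i + 1)) (t (j + 1)) ≤ t (i + 1) := min_le_left _ _
        _ ≤ t j := h1
        _ ≤ max (t i) (t j) := le_max_right _ _
    rcases hij.lt_or_gt with h | h
    · exact key i j h
    · exact (key j i h).symm
  have hEsub : ∀ j, E j ⊆ Set.Ici (0:ℝ) := by
    intro j u hu
    exact le_trans (ht0 j) hu.1
  have hHS : ∀ g : G, HasSum (fun j => ∫ u in E j, ‖⟪f, expT A u (g : H)⟫‖ ^ 2)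
      (∫ u in Set.Ici (0:ℝ), ‖⟪f, expT A u (g : H)⟫‖ ^ 2) := by
    intro g
    have h1 := hasSum_integral_iUnion (μ := volume) hEmeas hEdisj
      (f := fun u => ‖⟪f, expT A u (g : H)⟫‖ ^ 2)
      (by rw [← hpart]; exact int_h hst hM0 hω f (g : H))
    rwa [← hpart] at h1
  have hHSexp : HasSum (fun j => ∫ u in E j, Real.exp (2 * ω * u)) V := by
    have h1 := hasSum_integral_iUnion (μ := volume) hEmeas hEdisj
      (f := fun u => Real.exp (2 * ω * u)) (by rw [← hpart]; exact exp2_integrable hω)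
    rwa [← hpart] at h1
  have stepj : ∀ (s : Finset G) (j : ℕ),
      ∑ g ∈ s, ∫ u in E j, ‖⟪f, expT A u (g : H)⟫‖ ^ 2
        ≤ 2 * δ * (∑ g ∈ s, ‖⟪f, expT A (t j) (g : H)⟫‖ ^ 2)
          + (Cδ * ‖f‖ ^ 2) * ∫ u in E j, Real.exp (2 * ω * u) := by
    intro s j
    have hintEg : ∀ g : G, IntegrableOn (fun u => ‖⟪f, expT A u (g : H)⟫‖ ^ 2) (E j) :=
      fun g => (int_h hst hM0 hω f (g : H)).mono_set (hEsub j)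
    have hintexp : IntegrableOn (fun u => Real.exp (2 * ω * u)) (E j) :=
      (exp2_integrable hω).mono_set (hEsub j)
    have hEfin : volume (E j) < ⊤ := by
      rw [hE]; simp only; rw [Real.volume_Ico]; exact ENNReal.ofReal_lt_top
    have hptwise : ∀ u ∈ E j,
        ∑ g ∈ s, ‖⟪f, expT A u (g : H)⟫‖ ^ 2
          ≤ 2 * (∑ g ∈ s, ‖⟪f, expT A (t j) (g : H)⟫‖ ^ 2)
            + (Cδ * ‖f‖ ^ 2) * Real.exp (2 * ω * u) := by
      intro u hu
      have hutj : t j ≤ u := hu.1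
      have hud : u - t j < δ := by
        have := hlt j
        have := hu.2
        linarith
      have hper : ∀ g : G,
          ‖⟪f, expT A u (g : H)⟫‖ ^ 2
            ≤ 2 * ‖⟪f, expT A (t j) (g : H)⟫‖ ^ 2
              + 2 * ‖⟪f, (expT A u - expT A (t j)) (g : H)⟫‖ ^ 2 := by
        intro g
        have htri : ‖⟪f, expT A u (g : H)⟫‖
            ≤ ‖⟪f, expT A (t j) (g : H)⟫‖
              + ‖⟪f, (expT A u - expT A (t j)) (g : H)⟫‖ := by
          have heq : ⟪f, expT A u (g : H)⟫
              = ⟪f, expT A (t j) (g : H)⟫ + ⟪f, (expT A u - expT A (t j)) (g : H)⟫ := by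
            rw [ContinuousLinearMap.sub_apply, inner_sub_right]
            ring
          rw [heq]
          exact norm_add_le _ _
        have := sq_upper (norm_nonneg ⟪f, expT A (t j) (g : H)⟫)
          (norm_nonneg ⟪f, (expT A u - expT A (t j)) (g : H)⟫) htri (norm_nonneg _)
        linarith
      have hΔ : ‖expT A u - expT A (t j)‖ ≤ M * Real.exp (ω * t j) * εδ := by
        have h3 := expT_sub_norm A hst (ht0 j) hutj
        have h4 : (u - t j) * ‖A‖ * Real.exp ((u - t j) * ‖A‖) ≤ εδ := by
          rw [hεδ, hnA]
          exact eps_mono (norm_nonneg A) (by linarith) hud.le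
        calc ‖expT A u - expT A (t j)‖
            ≤ M * Real.exp (ω * t j)
              * ((u - t j) * ‖A‖ * Real.exp ((u - t j) * ‖A‖)) := h3
          _ ≤ M * Real.exp (ω * t j) * εδ :=
              mul_le_mul_of_nonneg_left h4 (mul_nonneg hM0 (Real.exp_pos _).le)
      have hΔsq : ‖expT A u - expT A (t j)‖ ^ 2
          ≤ M ^ 2 * εδ ^ 2 * (Real.exp (-(2 * ω * δ)) * Real.exp (2 * ω * u)) := by
        have h5 : Real.exp (ω * t j) ^ 2 ≤ Real.exp (-(2 * ω * δ)) * Real.exp (2 * ω * u) := by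
          rw [sq, ← Real.exp_add, ← Real.exp_add]
          apply Real.exp_le_exp.2
          nlinarith [hud, hω]
        calc ‖expT A u - expT A (t j)‖ ^ 2
            ≤ (M * Real.exp (ω * t j) * εδ) ^ 2 := pow_le_pow_left₀ (norm_nonneg _) hΔ 2
          _ = M ^ 2 * εδ ^ 2 * Real.exp (ω * t j) ^ 2 := by ring
          _ ≤ M ^ 2 * εδ ^ 2 * (Real.exp (-(2 * ω * δ)) * Real.exp (2 * ω * u)) := by
              apply mul_le_mul_of_nonneg_left h5 (by positivity)
      have hysum := hB.finsum hK.le (expT A u - expT A (t j)) f s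
      have hybound : ∑ g ∈ s, ‖⟪f, (expT A u - expT A (t j)) (g : H)⟫‖ ^ 2
          ≤ K * M ^ 2 * εδ ^ 2 * Real.exp (-(2 * ω * δ)) * Real.exp (2 * ω * u) * ‖f‖ ^ 2 := by
        calc ∑ g ∈ s, ‖⟪f, (expT A u - expT A (t j)) (g : H)⟫‖ ^ 2
            ≤ K * (‖expT A u - expT A (t j)‖ ^ 2 * ‖f‖ ^ 2) := hysum
          _ ≤ K * (M ^ 2 * εδ ^ 2 * (Real.exp (-(2 * ω * δ)) * Real.exp (2 * ω * u)) * ‖f‖ ^ 2) := by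
              apply mul_le_mul_of_nonneg_left _ hK.le
              exact mul_le_mul_of_nonneg_right hΔsq (sq_nonneg _)
          _ = K * M ^ 2 * εδ ^ 2 * Real.exp (-(2 * ω * δ)) * Real.exp (2 * ω * u) * ‖f‖ ^ 2 := by
              ring
      have hsum3 : ∑ g ∈ s, ‖⟪f, expT A u (g : H)⟫‖ ^ 2
          ≤ 2 * (∑ g ∈ s, ‖⟪f, expT A (t j) (g : H)⟫‖ ^ 2)
            + 2 * ∑ g ∈ s, ‖⟪f, (expT A u - expT A (t j)) (g : H)⟫‖ ^ 2 := by
        have := Finset.sum_le_sum (fun g (_ : g ∈ s) => hper g)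
        rw [Finset.sum_add_distrib, ← Finset.mul_sum, ← Finset.mul_sum] at this
        linarith
      have hfinal : 2 * ∑ g ∈ s, ‖⟪f, (expT A u - expT A (t j)) (g : H)⟫‖ ^ 2
          ≤ (Cδ * ‖f‖ ^ 2) * Real.exp (2 * ω * u) := by
        rw [hCδ]
        nlinarith [hybound]
      linarith
    have h1 : ∑ g ∈ s, ∫ u in E j, ‖⟪f, expT A u (g : H)⟫‖ ^ 2
        = ∫ u in E j, ∑ g ∈ s, ‖⟪f, expT A u (g : H)⟫‖ ^ 2 :=
      (integral_finset_sum s (fun g _ => hintEg g)).symm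
    have h2 : ∫ u in E j, ∑ g ∈ s, ‖⟪f, expT A u (g : H)⟫‖ ^ 2
        ≤ ∫ u in E j, (2 * (∑ g ∈ s, ‖⟪f, expT A (t j) (g : H)⟫‖ ^ 2)
            + (Cδ * ‖f‖ ^ 2) * Real.exp (2 * ω * u)) := by
      apply setIntegral_mono_on
      · exact integrable_finset_sum s (fun g _ => hintEg g)
      · exact (integrableOn_const hEfin.ne).add (hintexp.const_mul _)
      · exact hEmeas j
      · exact hptwise
    have h3 : ∫ u in E j, (2 * (∑ g ∈ s, ‖⟪f, expT A (t j) (g : H)⟫‖ ^ 2)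
            + (Cδ * ‖f‖ ^ 2) * Real.exp (2 * ω * u))
        = (volume (E j)).toReal * (2 * (∑ g ∈ s, ‖⟪f, expT A (t j) (g : H)⟫‖ ^ 2))
          + (Cδ * ‖f‖ ^ 2) * ∫ u in E j, Real.exp (2 * ω * u) := by
      rw [integral_add (integrableOn_const (C := 2 * (∑ g ∈ s, ‖⟪f, expT A (t j) (g : H)⟫‖ ^ 2)) hEfin.ne) (hintexp.const_mul _)]
      congr 1
      · rw [setIntegral_const, smul_eq_mul]; rfl
      · exact integral_const_mul _ _
    have h4 : (volume (E j)).toReal * (2 * (∑ g ∈ s, ‖⟪f, expT A (t j) (g : H)⟫‖ ^ 2))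
        ≤ 2 * δ * (∑ g ∈ s, ‖⟪f, expT A (t j) (g : H)⟫‖ ^ 2) := by
      have h5 : (volume (E j)).toReal ≤ δ := by
        rw [hE]; simp only; rw [Real.volume_Ico]
        rw [ENNReal.toReal_ofReal_eq_iff.2 ?_]
        · linarith [hlt j]
        · linarith [hgap j, hδ₀]
      have h6 : (0:ℝ) ≤ ∑ g ∈ s, ‖⟪f, expT A (t j) (g : H)⟫‖ ^ 2 :=
        Finset.sum_nonneg (fun g _ => by positivity)
      nlinarith
    rw [h1]
    calc _ ≤ _ := h2
      _ = _ := h3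
      _ ≤ 2 * δ * (∑ g ∈ s, ‖⟪f, expT A (t j) (g : H)⟫‖ ^ 2)
          + (Cδ * ‖f‖ ^ 2) * ∫ u in E j, Real.exp (2 * ω * u) := by
        linarith [h4]
  -- sum over j
  have hkey : ∀ s : Finset G,
      ∑ g ∈ s, ∫ u in Set.Ici (0:ℝ), ‖⟪f, expT A u (g : H)⟫‖ ^ 2
        ≤ 2 * δ * (∑' g : G, ∑' j : ℕ, ‖⟪f, expT A (t j) (g : H)⟫‖ ^ 2)
          + (c / 2) * ‖f‖ ^ 2 := by
    intro s
    have e1 : ∑ g ∈ s, ∫ u in Set.Ici (0:ℝ), ‖⟪f, expT A u (g : H)⟫‖ ^ 2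
        = ∑' j : ℕ, ∑ g ∈ s, ∫ u in E j, ‖⟪f, expT A u (g : H)⟫‖ ^ 2 := by
      rw [Summable.tsum_finsetSum (fun g _ => (hHS g).summable)]
      apply Finset.sum_congr rfl
      intro g _
      exact ((hHS g).tsum_eq).symm
    have hsl : Summable fun j : ℕ => ∑ g ∈ s, ∫ u in E j, ‖⟪f, expT A u (g : H)⟫‖ ^ 2 :=
      summable_sum (fun g _ => (hHS g).summable)
    have hsr1 : Summable fun j : ℕ =>
        2 * δ * (∑ g ∈ s, ‖⟪f, expT A (t j) (g : H)⟫‖ ^ 2) :=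
      (summable_sum (fun g (_ : g ∈ s) => hin g)).mul_left _
    have hsr2 : Summable fun j : ℕ =>
        (Cδ * ‖f‖ ^ 2) * ∫ u in E j, Real.exp (2 * ω * u) := hHSexp.summable.mul_left _
    have e2 : ∑' j : ℕ, ∑ g ∈ s, ∫ u in E j, ‖⟪f, expT A u (g : H)⟫‖ ^ 2
        ≤ ∑' j : ℕ, (2 * δ * (∑ g ∈ s, ‖⟪f, expT A (t j) (g : H)⟫‖ ^ 2)
            + (Cδ * ‖f‖ ^ 2) * ∫ u in E j, Real.exp (2 * ω * u)) :=
      Summable.tsum_le_tsum (fun j => stepj s j) hsl (hsr1.add hsr2)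
    have e3 : ∑' j : ℕ, (2 * δ * (∑ g ∈ s, ‖⟪f, expT A (t j) (g : H)⟫‖ ^ 2)
            + (Cδ * ‖f‖ ^ 2) * ∫ u in E j, Real.exp (2 * ω * u))
        = 2 * δ * (∑' j : ℕ, ∑ g ∈ s, ‖⟪f, expT A (t j) (g : H)⟫‖ ^ 2)
          + (Cδ * ‖f‖ ^ 2) * V := by
      rw [Summable.tsum_add hsr1 hsr2, tsum_mul_left, tsum_mul_left, hHSexp.tsum_eq]
    have e4 : ∑' j : ℕ, ∑ g ∈ s, ‖⟪f, expT A (t j) (g : H)⟫‖ ^ 2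
        ≤ ∑' g : G, ∑' j : ℕ, ‖⟪f, expT A (t j) (g : H)⟫‖ ^ 2 := by
      rw [Summable.tsum_finsetSum (fun g _ => hin g)]
      exact Summable.sum_le_tsum s (fun g _ => hΨnn g) hΨsum
    have e5 : (Cδ * ‖f‖ ^ 2) * V ≤ (c / 2) * ‖f‖ ^ 2 := by
      have h7 : Cδ * V < c / 2 := by rw [← hqeq]; exact hqδ
      nlinarith [sq_nonneg ‖f‖, hCδ0, hV.le]
    calc ∑ g ∈ s, ∫ u in Set.Ici (0:ℝ), ‖⟪f, expT A u (g : H)⟫‖ ^ 2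
        = ∑' j : ℕ, ∑ g ∈ s, ∫ u in E j, ‖⟪f, expT A u (g : H)⟫‖ ^ 2 := e1
      _ ≤ _ := e2
      _ = _ := e3
      _ ≤ 2 * δ * (∑' g : G, ∑' j : ℕ, ‖⟪f, expT A (t j) (g : H)⟫‖ ^ 2)
          + (c / 2) * ‖f‖ ^ 2 := by
          have := mul_le_mul_of_nonneg_left e4 (by linarith : (0:ℝ) ≤ 2 * δ)
          linarith
  have hΦle : ∑' g : G, ∫ u in Set.Ici (0:ℝ), ‖⟪f, expT A u (g : H)⟫‖ ^ 2
      ≤ 2 * δ * (∑' g : G, ∑' j : ℕ, ‖⟪f, expT A (t j) (g : H)⟫‖ ^ 2)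
        + (c / 2) * ‖f‖ ^ 2 := Summable.tsum_le_of_sum_le hIsum hkey
  have hlow := (hfr f).1
  rw [div_mul_eq_mul_div, div_le_iff₀ (by linarith : (0:ℝ) < 4 * δ)]
  nlinarith [hΦle, hlow]
end Chunk7

theorem stmt2
    {H : Type*} [NormedAddCommGroup H] [InnerProductSpace ℂ H] [CompleteSpace H]
    [TopologicalSpace.SeparableSpace H]
    (A : H →L[ℂ] H) (G : Set H) (hGc : G.Countable) (hG : IsBesselSet G)
    (hstable : ExpStable A) :
    List.TFAE
      [ SemiContFrame A G (Set.Ici 0),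
        ∃ δ > (0 : ℝ), ∀ t : ℕ → ℝ,
          t 0 = 0 → StrictMono t →
          (∃ δ₀ > (0 : ℝ), ∀ j : ℕ, δ₀ ≤ t (j + 1) - t j) →
          (∀ j : ℕ, t (j + 1) - t j < δ) →
          NatTimeFrame A G t,
        ∃ m > (0 : ℝ), NatTimeFrame A G (fun j : ℕ => (j : ℝ) * m) ] := by
  obtain ⟨M, hM, ω, hω, hst⟩ := hstable
  have hM0 : (0:ℝ) ≤ M := by linarith
  obtain ⟨K, hK, hwB⟩ := hG
  tfae_have 1 → 2
  · rintro ⟨c, hc, C, hC, hfr⟩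
    have hB : HBessel G K :=
      semiCont_HB hGc hwB hK hst hM0 hω hc (fun f => (hfr f).1)
    exact semiCont_natFrame hB hK hM hω hst hc hC hfr
  tfae_have 2 → 3
  · rintro ⟨δ, hδ, h2⟩
    refine ⟨δ / 2, by linarith, ?_⟩
    apply h2
    · simp
    · apply strictMono_nat_of_lt_succ
      intro n
      push_cast
      nlinarith
    · refine ⟨δ / 2, by linarith, fun j => ?_⟩
      push_cast
      nlinarith
    · intro j
      push_cast
      nlinarith
  tfae_have 3 → 1
  · rintro ⟨m, hm, c, hc, C, hC, hfr⟩
    have hB : HBessel G C :=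
      natFrame_HB hst hM0 hω hm (fun j => by positivity) (fun j => le_refl _)
        (by simp) hc hC.le hfr
    exact natFrame_semiCont hB hC hM hω hst hm hc hC hfr
  tfae_finish

end
end

section
/- Let H be an infinite-dimensional complex separable Hilbert space and A ∈ B(H) such that the semigroup {e^{tA}}_{t≥0} is exponentially stable. If G ⊂ H is a countable Bessel system such that {e^{tA}g}_{g∈G, t∈[0,∞)} is a semi-continuous frame for H, then G is infinite. -/
open MeasureTheory
open scoped ComplexInnerProductSpace

noncomputable section

variable {H : Type*} [NormedAddCommGroup H] [InnerProductSpace ℂ H] [CompleteSpace H]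

theorem stmt6
    {H : Type*} [NormedAddCommGroup H] [InnerProductSpace ℂ H] [CompleteSpace H]
    [TopologicalSpace.SeparableSpace H]
    (hinf : ¬ FiniteDimensional ℂ H)
    (A : H →L[ℂ] H) (hstable : ExpStable A)
    (G : Set H) (hGc : G.Countable) (hG : IsBesselSet G)
    (hframe : SemiContFrame A G (Set.Ici 0)) :
    G.Infinite := by
  by_contra hfin
  rw [Set.not_infinite] at hfin
  haveI : Fintype G := hfin.fintype
  obtain ⟨M, hM1, ω, hω, hbound⟩ := hstable
  obtain ⟨c, hc, C, hC, hineq⟩ := hframe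
  -- find an orthonormal sequence
  obtain ⟨w, b, hb⟩ := exists_hilbertBasis ℂ H
  have hwinf : w.Infinite := by
    intro hwfin
    apply hinf
    haveI : FiniteDimensional ℂ (Submodule.span ℂ w) :=
      FiniteDimensional.span_of_finite ℂ hwfin
    have hclosed : IsClosed ((Submodule.span ℂ w : Submodule ℂ H) : Set H) :=
      Submodule.closed_of_finiteDimensional _
    have h1 := b.dense_span
    rw [hb, Subtype.range_coe] at h1
    have htop : (Submodule.span ℂ w : Submodule ℂ H) = ⊤ := by
      rw [← hclosed.submodule_topologicalClosure_eq]
      exact h1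
    have : FiniteDimensional ℂ (⊤ : Submodule ℂ H) := htop ▸ inferInstance
    exact Submodule.topEquiv.finiteDimensional
  let e := hwinf.natEmbedding
  set v : ℕ → H := fun n => ((e n : w) : H) with hv_def
  have hv : Orthonormal ℂ v := by
    have hbo : Orthonormal ℂ ((↑) : w → H) := hb ▸ b.orthonormal
    exact hbo.comp e e.injective
  have hvnorm : ∀ n, ‖v n‖ = 1 := fun n => hv.1 n
  -- each integral tends to zero
  have hωneg : (0 : ℝ) < -(2 * ω) := by linarith
  have key : ∀ g : G, Filter.Tendsto
      (fun n => ∫ t in Set.Ici (0 : ℝ), ‖⟪v n, expT A t (g : H)⟫‖ ^ 2)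
      Filter.atTop (nhds 0) := by
    intro g
    have hcont : ∀ n, Continuous fun t : ℝ => ‖⟪v n, expT A t (g : H)⟫‖ ^ 2 := by
      intro n
      have h1 : Continuous fun t : ℝ => expT A t (g : H) := by
        have : Continuous fun t : ℝ => expT A t := by
          unfold expT
          exact (continuous_iff_continuousAt.2 fun x => (NormedSpace.exp_analytic (𝕂 := ℂ) x).continuousAt).comp
            ((Complex.continuous_ofReal).smul (continuous_const (y := A)))
        exact (ContinuousLinearMap.apply ℂ H (g : H)).continuous.comp this
      exact (continuous_const.inner h1).norm.pow 2
    have h0 : Filter.Tendsto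
        (fun n => ∫ t in Set.Ici (0 : ℝ), ‖⟪v n, expT A t (g : H)⟫‖ ^ 2)
        Filter.atTop (nhds (∫ _ in Set.Ici (0 : ℝ), (0 : ℝ))) := by
      apply MeasureTheory.tendsto_integral_of_dominated_convergence
        (fun t => M ^ 2 * ‖(g : H)‖ ^ 2 * Real.exp (-(-(2 * ω)) * t))
      · intro n
        exact ((hcont n).aestronglyMeasurable).restrict
      · have : MeasureTheory.IntegrableOn
            (fun t : ℝ => Real.exp (-(-(2 * ω)) * t)) (Set.Ioi (0 : ℝ)) :=
          exp_neg_integrableOn_Ioi 0 hωneg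
        have h2 : MeasureTheory.IntegrableOn
            (fun t : ℝ => Real.exp (-(-(2 * ω)) * t)) (Set.Ici (0 : ℝ)) :=
          Iff.mpr integrableOn_Ici_iff_integrableOn_Ioi this
        exact h2.const_mul _
      · intro n
        filter_upwards [MeasureTheory.ae_restrict_mem measurableSet_Ici] with t ht
        have hnn : (0 : ℝ) ≤ ‖⟪v n, expT A t (g : H)⟫‖ ^ 2 := by positivity
        rw [Real.norm_of_nonneg hnn]
        have h1 : ‖⟪v n, expT A t (g : H)⟫‖ ≤ M * Real.exp (ω * t) * ‖(g : H)‖ := by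
          calc ‖⟪v n, expT A t (g : H)⟫‖ ≤ ‖v n‖ * ‖expT A t (g : H)‖ :=
                norm_inner_le_norm _ _
            _ = ‖expT A t (g : H)‖ := by rw [hvnorm n, one_mul]
            _ ≤ ‖expT A t‖ * ‖(g : H)‖ := (expT A t).le_opNorm _
            _ ≤ M * Real.exp (ω * t) * ‖(g : H)‖ := by
                apply mul_le_mul_of_nonneg_right (hbound t ht) (norm_nonneg _)
        have h2 : ‖⟪v n, expT A t (g : H)⟫‖ ^ 2 ≤ (M * Real.exp (ω * t) * ‖(g : H)‖) ^ 2 := by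
          apply pow_le_pow_left₀ (norm_nonneg _) h1
        refine h2.trans (le_of_eq ?_)
        rw [neg_neg]
        have : Real.exp (2 * ω * t) = Real.exp (ω * t) ^ 2 := by
          rw [← Real.exp_nat_mul]; ring_nf
        rw [this]; ring
      · filter_upwards with t
        have hsum : Summable fun n => ‖⟪v n, expT A t (g : H)⟫‖ ^ 2 :=
          hv.inner_products_summable (expT A t (g : H))
        exact hsum.tendsto_atTop_zero
    rwa [MeasureTheory.integral_zero] at h0
  -- the finite sum tends to zero
  have hsum0 : Filter.Tendsto
      (fun n => ∑' g : G, ∫ t in Set.Ici (0 : ℝ), ‖⟪v n, expT A t (g : H)⟫‖ ^ 2)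
      Filter.atTop (nhds 0) := by
    have heq : ∀ n, (∑' g : G, ∫ t in Set.Ici (0 : ℝ), ‖⟪v n, expT A t (g : H)⟫‖ ^ 2)
        = ∑ g : G, ∫ t in Set.Ici (0 : ℝ), ‖⟪v n, expT A t (g : H)⟫‖ ^ 2 :=
      fun n => tsum_fintype _
    simp only [heq]
    have := tendsto_finset_sum (Finset.univ : Finset G) (fun g _ => key g)
    simpa using this
  -- lower bound gives a contradiction
  have hlow : ∀ n, c ≤ ∑' g : G, ∫ t in Set.Ici (0 : ℝ), ‖⟪v n, expT A t (g : H)⟫‖ ^ 2 := by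
    intro n
    have := (hineq (v n)).1
    rwa [hvnorm n, one_pow, mul_one] at this
  have : c ≤ 0 := ge_of_tendsto' hsum0 hlow
  linarith

end
end

section
/- Let H be a complex separable Hilbert space and A ∈ B(H) an operator having an orthonormal basis {e_j}_{j∈J} of eigenvectors with A e_j = η_j e_j where |η_j| < 1 for all j. Let a ∈ H and suppose the orbit {Aⁿa}_{n∈ℕ∪{0}} is a Bessel system in H. Then for every c ∈ H, Σ_{n=0}^∞ |⟨Aⁿ a, c⟩|² = Σ_{j,k∈J} (conj(a_k) c_k a_j conj(c_j)) / (1 − η_j conj(η_k)), where a_j := ⟨a, e_j⟩, c_j := ⟨c, e_j⟩, and the right-hand side is a convergent double series (summed first over j, then over k). -/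
open MeasureTheory
open scoped ComplexInnerProductSpace

noncomputable section

variable {H : Type*} [NormedAddCommGroup H] [InnerProductSpace ℂ H] [CompleteSpace H]

set_option maxHeartbeats 1000000

section Aux

theorem auxInner {J : Type*} [Countable J] (η α γ : J → ℂ) (u : ℕ → ℂ)
    (hη : ∀ j, ‖η j‖ < 1)
    (habs : Summable (fun j : J => ‖α j‖ * ‖γ j‖))
    (hun : ∀ n : ℕ, HasSum (fun j : J => η j ^ n * α j * (starRingEnd ℂ) (γ j))
      ((starRingEnd ℂ) (u n)))
    (k : J) :
    Summable (fun j : J => (starRingEnd ℂ) (α k) * γ k * α j *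
        (starRingEnd ℂ) (γ j) / (1 - η j * (starRingEnd ℂ) (η k))) ∧
      ∑' j : J, (starRingEnd ℂ) (α k) * γ k * α j *
          (starRingEnd ℂ) (γ j) / (1 - η j * (starRingEnd ℂ) (η k)) =
        γ k * ∑' n : ℕ, (starRingEnd ℂ) (u n) *
          ((starRingEnd ℂ) (η k) ^ n * (starRingEnd ℂ) (α k)) := by
  have hηk : ‖(starRingEnd ℂ) (η k)‖ = ‖η k‖ := RCLike.norm_conj _
  have hxlt : ∀ j, ‖η j * (starRingEnd ℂ) (η k)‖ < 1 := by
    intro j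
    rw [norm_mul, hηk]
    calc ‖η j‖ * ‖η k‖ ≤ 1 * ‖η k‖ := by
          gcongr; exact (hη j).le
      _ = ‖η k‖ := one_mul _
      _ < 1 := hη k
  have hd0 : (0 : ℝ) < 1 - ‖η k‖ := by linarith [hη k]
  have hdenom : ∀ j, 1 - ‖η k‖ ≤ ‖1 - η j * (starRingEnd ℂ) (η k)‖ := by
    intro j
    have h1 : ‖(1 : ℂ)‖ - ‖η j * (starRingEnd ℂ) (η k)‖ ≤ ‖1 - η j * (starRingEnd ℂ) (η k)‖ :=
      norm_sub_norm_le _ _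
    rw [norm_one, norm_mul, hηk] at h1
    have h2 : ‖η j‖ * ‖η k‖ ≤ ‖η k‖ :=
      mul_le_of_le_one_left (norm_nonneg _) (hη j).le
    linarith
  have hnorm4 : ∀ j, ‖(starRingEnd ℂ) (α k) * γ k * α j * (starRingEnd ℂ) (γ j)‖ =
      ‖α k‖ * ‖γ k‖ * (‖α j‖ * ‖γ j‖) := by
    intro j
    rw [norm_mul, norm_mul, norm_mul, RCLike.norm_conj, RCLike.norm_conj]
    ring
  have hsum : Summable (fun j : J => (starRingEnd ℂ) (α k) * γ k * α j *
      (starRingEnd ℂ) (γ j) / (1 - η j * (starRingEnd ℂ) (η k))) := by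
    refine Summable.of_norm_bounded
      (g := fun j => ‖α k‖ * ‖γ k‖ / (1 - ‖η k‖) * (‖α j‖ * ‖γ j‖)) (habs.mul_left _) (fun j => ?_)
    rw [norm_div, hnorm4]
    rw [div_le_iff₀ (lt_of_lt_of_le hd0 (hdenom j))]
    calc ‖α k‖ * ‖γ k‖ * (‖α j‖ * ‖γ j‖)
        = ‖α k‖ * ‖γ k‖ / (1 - ‖η k‖) * (‖α j‖ * ‖γ j‖) * (1 - ‖η k‖) := by
          rw [div_mul_eq_mul_div, div_mul_eq_mul_div, mul_div_assoc,
            div_self hd0.ne', mul_one]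
      _ ≤ ‖α k‖ * ‖γ k‖ / (1 - ‖η k‖) * (‖α j‖ * ‖γ j‖) *
          ‖1 - η j * (starRingEnd ℂ) (η k)‖ :=
          mul_le_mul_of_nonneg_left (hdenom j) (by positivity)
  refine ⟨hsum, ?_⟩
  set F : J × ℕ → ℂ := fun p => (starRingEnd ℂ) (α k) * γ k * α p.1 *
    (starRingEnd ℂ) (γ p.1) * (η p.1 * (starRingEnd ℂ) (η k)) ^ p.2 with hF
  have hFbound : ∀ p : J × ℕ, ‖F p‖ ≤
      (‖α k‖ * ‖γ k‖ * (‖α p.1‖ * ‖γ p.1‖)) * ‖η k‖ ^ p.2 := by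
    rintro ⟨j, n⟩
    rw [hF]
    simp only
    rw [norm_mul, hnorm4, norm_pow, norm_mul, hηk]
    have hle : (‖η j‖ * ‖η k‖) ^ n ≤ ‖η k‖ ^ n := by
      apply pow_le_pow_left₀ (by positivity)
      calc ‖η j‖ * ‖η k‖ ≤ 1 * ‖η k‖ := by gcongr; exact (hη j).le
        _ = ‖η k‖ := one_mul _
    exact mul_le_mul_of_nonneg_left hle (by positivity)
  have hFsummable : Summable F := by
    have hprod := Summable.mul_of_nonneg (habs.mul_left (‖α k‖ * ‖γ k‖))
      (summable_geometric_of_lt_one (norm_nonneg _) (hη k))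
      (fun j => by positivity) (fun n => by positivity)
    exact Summable.of_norm_bounded hprod hFbound
  have hFj : ∀ j : J, Summable (fun n : ℕ => F (j, n)) := by
    intro j
    have heq : (fun n : ℕ => F (j, n)) = fun n : ℕ =>
        ((starRingEnd ℂ) (α k) * γ k * α j * (starRingEnd ℂ) (γ j)) *
          (η j * (starRingEnd ℂ) (η k)) ^ n := by
      funext n; rw [hF]
    rw [heq]
    exact (summable_geometric_of_norm_lt_one (hxlt j)).mul_left _
  have hFn : ∀ n : ℕ, Summable (fun j : J => F (j, n)) := by
    intro n
    refine Summable.of_norm_bounded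
      (g := fun j => (‖α k‖ * ‖γ k‖ * ‖η k‖ ^ n) * (‖α j‖ * ‖γ j‖)) (habs.mul_left _)
      (fun j => le_trans (hFbound (j, n)) (le_of_eq (by ring)))
  have hterm : ∀ j : J, (starRingEnd ℂ) (α k) * γ k * α j *
      (starRingEnd ℂ) (γ j) / (1 - η j * (starRingEnd ℂ) (η k)) = ∑' n : ℕ, F (j, n) := by
    intro j
    rw [hF]
    simp only
    rw [tsum_mul_left, tsum_geometric_of_norm_lt_one (hxlt j), div_eq_mul_inv]
  calc ∑' j : J, (starRingEnd ℂ) (α k) * γ k * α j *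
        (starRingEnd ℂ) (γ j) / (1 - η j * (starRingEnd ℂ) (η k))
      = ∑' (j : J) (n : ℕ), F (j, n) := tsum_congr hterm
    _ = ∑' (n : ℕ) (j : J), F (j, n) := by
        refine (Summable.tsum_comm' (f := fun j n => F (j, n)) ?_ (fun j => hFj j) (fun n => hFn n)).symm
        exact hFsummable
    _ = ∑' n : ℕ, (starRingEnd ℂ) (u n) *
          (γ k * ((starRingEnd ℂ) (η k) ^ n * (starRingEnd ℂ) (α k))) := by
        refine tsum_congr (fun n => ?_)
        have h1 : (fun j : J => F (j, n)) =
            (fun j : J => ((starRingEnd ℂ) (α k) * γ k * (starRingEnd ℂ) (η k) ^ n) *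
              (η j ^ n * α j * (starRingEnd ℂ) (γ j))) := by
          funext j
          rw [hF]
          simp only
          rw [mul_pow]
          ring
        rw [h1, tsum_mul_left, (hun n).tsum_eq]
        ring
    _ = γ k * ∑' n : ℕ, (starRingEnd ℂ) (u n) *
          ((starRingEnd ℂ) (η k) ^ n * (starRingEnd ℂ) (α k)) := by
        rw [← tsum_mul_left]
        refine tsum_congr (fun n => ?_)
        ring


theorem auxBessel {H : Type*} [NormedAddCommGroup H] [InnerProductSpace ℂ H] [CompleteSpace H]
    {J : Type*} [Countable J]
    (A : H →L[ℂ] H) (b : HilbertBasis J ℂ H) (η : J → ℂ) (a : H)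
    (hpow : ∀ (k : J) (n : ℕ) (y : H), ⟪b k, (A ^ n) y⟫ = η k ^ n * ⟪b k, y⟫)
    (hη : ∀ j, ‖η j‖ < 1)
    (K : ℝ) (hB : ∀ f : H, ∑' n : ℕ, ‖⟪f, (A ^ n) a⟫‖ ^ 2 ≤ K * ‖f‖ ^ 2)
    (f : H) :
    Summable (fun n : ℕ => ‖⟪f, (A ^ n) a⟫‖ ^ 2) ∧
      ∑' n : ℕ, ‖⟪f, (A ^ n) a⟫‖ ^ 2 ≤ K * ‖f‖ ^ 2 := by
  have hspanSum : ∀ g ∈ Submodule.span ℂ (Set.range ⇑b),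
      Summable (fun n : ℕ => ‖⟪g, (A ^ n) a⟫‖ ^ 2) := by
    intro g hg
    induction hg using Submodule.span_induction with
    | mem x hx =>
      obtain ⟨j, rfl⟩ := hx
      have : ∀ n : ℕ, ‖⟪b j, (A ^ n) a⟫‖ ^ 2 = (‖η j‖ ^ 2) ^ n * ‖⟪b j, a⟫‖ ^ 2 := by
        intro n
        rw [hpow j n a, norm_mul, mul_pow, norm_pow, pow_right_comm]
      rw [funext this]
      exact (summable_geometric_of_lt_one (by positivity)
        (by rw [sq_lt_one_iff_abs_lt_one, abs_of_nonneg (norm_nonneg _)]; exact hη j)).mul_right _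
    | zero => simpa using summable_zero
    | add x y hx hy ihx ihy =>
      refine Summable.of_nonneg_of_le (fun n => by positivity)
        (fun n => ?_) ((ihx.add ihy).mul_left 2)
      rw [inner_add_left]
      calc ‖⟪x, (A ^ n) a⟫ + ⟪y, (A ^ n) a⟫‖ ^ 2
          ≤ (‖⟪x, (A ^ n) a⟫‖ + ‖⟪y, (A ^ n) a⟫‖) ^ 2 := by
            gcongr; exact norm_add_le _ _
        _ ≤ 2 * (‖⟪x, (A ^ n) a⟫‖ ^ 2 + ‖⟪y, (A ^ n) a⟫‖ ^ 2) := by nlinarith [sq_nonneg (‖⟪x, (A ^ n) a⟫‖ - ‖⟪y, (A ^ n) a⟫‖)]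
    | smul c x hx ihx =>
      refine Summable.of_nonneg_of_le (fun n => by positivity)
        (fun n => le_of_eq ?_) (ihx.mul_left (‖c‖ ^ 2))
      rw [inner_smul_left, norm_mul, mul_pow, RCLike.norm_conj]
  have hd : Dense ((Submodule.span ℂ (Set.range ⇑b) : Submodule ℂ H) : Set H) := by
    rw [dense_iff_closure_eq, ← Submodule.topologicalClosure_coe, b.dense_span]
    rfl
  have key : ∀ N : ℕ, ∀ g : H,
      ∑ n ∈ Finset.range N, ‖⟪g, (A ^ n) a⟫‖ ^ 2 ≤ K * ‖g‖ ^ 2 := by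
    intro N
    have hclosed : IsClosed {g : H | ∑ n ∈ Finset.range N, ‖⟪g, (A ^ n) a⟫‖ ^ 2 ≤ K * ‖g‖ ^ 2} := by
      apply isClosed_le
      · exact continuous_finset_sum _ fun n _ =>
          ((Continuous.inner continuous_id continuous_const).norm.pow 2)
      · exact (continuous_const.mul (continuous_norm.pow 2))
    have hsub : (Submodule.span ℂ (Set.range ⇑b) : Set H) ⊆
        {g : H | ∑ n ∈ Finset.range N, ‖⟪g, (A ^ n) a⟫‖ ^ 2 ≤ K * ‖g‖ ^ 2} := by
      intro g hg
      exact le_trans (Summable.sum_le_tsum _ (fun n _ => by positivity) (hspanSum g hg)) (hB g)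
    intro g
    have : (Set.univ : Set H) ⊆ _ := hd.closure_eq ▸ closure_minimal hsub hclosed
    exact this (Set.mem_univ g)
  refine ⟨summable_of_sum_range_le (fun n => by positivity) (fun N => key N f), ?_⟩
  exact Real.tsum_le_of_sum_range_le (fun n => by positivity) (fun N => key N f)


theorem auxHasSum {H : Type*} [NormedAddCommGroup H] [InnerProductSpace ℂ H] [CompleteSpace H]
    {J : Type*} [Countable J]
    (A : H →L[ℂ] H) (b : HilbertBasis J ℂ H) (a : H) (K : ℝ)
    (hSq : ∀ f : H, Summable (fun n : ℕ => ‖⟪f, (A ^ n) a⟫‖ ^ 2))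
    (hBd : ∀ f : H, ∑' n : ℕ, ‖⟪f, (A ^ n) a⟫‖ ^ 2 ≤ K * ‖f‖ ^ 2)
    (c : H) :
    HasSum (fun k : J => ⟪b k, c⟫ * ∑' n : ℕ, (starRingEnd ℂ) ⟪(A ^ n) a, c⟫ * ⟪(A ^ n) a, b k⟫)
      (((∑' n : ℕ, ‖⟪(A ^ n) a, c⟫‖ ^ 2 : ℝ) : ℂ)) := by
  set u : ℕ → ℂ := fun n => ⟪(A ^ n) a, c⟫ with hu
  have hnorm : ∀ (f : H) (n : ℕ), ‖⟪(A ^ n) a, f⟫‖ = ‖⟪f, (A ^ n) a⟫‖ := fun f n =>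
    norm_inner_symm _ _
  have hSq' : ∀ f : H, Summable (fun n : ℕ => ‖⟪(A ^ n) a, f⟫‖ ^ 2) := by
    intro f; simpa only [hnorm f] using hSq f
  have husq : Summable (fun n : ℕ => ‖u n‖ ^ 2) := hSq' c
  set U : ℝ := ∑' n : ℕ, ‖u n‖ ^ 2 with hU
  have hAbs : ∀ f : H, Summable (fun n : ℕ => ‖u n‖ * ‖⟪(A ^ n) a, f⟫‖) := by
    intro f
    refine Summable.of_nonneg_of_le (fun n => by positivity)
      (fun n => ?_) ((husq.add (hSq' f)).div_const 2)
    nlinarith [sq_nonneg (‖u n‖ - ‖⟪(A ^ n) a, f⟫‖)]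
  have hLsummable : ∀ f : H, Summable (fun n : ℕ => (starRingEnd ℂ) (u n) * ⟪(A ^ n) a, f⟫) := by
    intro f
    refine Summable.of_norm_bounded (hAbs f) (fun n => ?_)
    rw [norm_mul, RCLike.norm_conj]
  set Llin : H →ₗ[ℂ] ℂ :=
    { toFun := fun f => ∑' n : ℕ, (starRingEnd ℂ) (u n) * ⟪(A ^ n) a, f⟫
      map_add' := by
        intro x y
        rw [← Summable.tsum_add (hLsummable x) (hLsummable y)]
        congr 1; funext n; rw [inner_add_right]; ring
      map_smul' := by
        intro m x
        simp only [RingHom.id_apply]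
        rw [smul_eq_mul, ← tsum_mul_left]
        congr 1; funext n; rw [inner_smul_right]; ring } with hLl
  have hLbound : ∀ f : H, ‖Llin f‖ ≤ (U + K) / 2 * ‖f‖ := by
    intro f
    rcases eq_or_ne f 0 with rfl | hf
    · simp [hLl]
    have hft : (0 : ℝ) < ‖f‖ := norm_pos_iff.mpr hf
    have h1 : ‖Llin f‖ ≤ ∑' n : ℕ, ‖u n‖ * ‖⟪(A ^ n) a, f⟫‖ := by
      refine le_trans (norm_tsum_le_tsum_norm ?_) (le_of_eq ?_)
      · refine Summable.of_nonneg_of_le (fun n => by positivity) (fun n => ?_) (hAbs f)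
        rw [norm_mul, RCLike.norm_conj]
      · congr 1; funext n; rw [norm_mul, RCLike.norm_conj]
    have hg : Summable (fun n : ℕ => (‖f‖ * ‖u n‖ ^ 2 + ‖⟪(A ^ n) a, f⟫‖ ^ 2 / ‖f‖) / 2) :=
      (((husq.mul_left ‖f‖).add ((hSq' f).div_const ‖f‖)).div_const 2)
    have h2 : ∑' n : ℕ, ‖u n‖ * ‖⟪(A ^ n) a, f⟫‖ ≤
        ∑' n : ℕ, (‖f‖ * ‖u n‖ ^ 2 + ‖⟪(A ^ n) a, f⟫‖ ^ 2 / ‖f‖) / 2 := by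
      refine Summable.tsum_le_tsum (fun n => ?_) (hAbs f) hg
      have hs := sq_nonneg (‖f‖ * ‖u n‖ - ‖⟪(A ^ n) a, f⟫‖)
      have key : ‖u n‖ * ‖⟪(A ^ n) a, f⟫‖ * ‖f‖ * 2 ≤
          ‖f‖ * (‖f‖ * ‖u n‖ ^ 2) + ‖⟪(A ^ n) a, f⟫‖ ^ 2 := by nlinarith
      rw [le_div_iff₀ (by norm_num : (0:ℝ) < 2), ← sub_nonneg]
      have : ‖f‖ * ‖u n‖ ^ 2 + ‖⟪(A ^ n) a, f⟫‖ ^ 2 / ‖f‖ - ‖u n‖ * ‖⟪(A ^ n) a, f⟫‖ * 2 =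
          (‖f‖ * (‖f‖ * ‖u n‖ ^ 2) + ‖⟪(A ^ n) a, f⟫‖ ^ 2
            - ‖u n‖ * ‖⟪(A ^ n) a, f⟫‖ * ‖f‖ * 2) / ‖f‖ := by
        field_simp
      rw [this]
      refine div_nonneg ?_ hft.le
      nlinarith [key]
    have h3 : ∑' n : ℕ, (‖f‖ * ‖u n‖ ^ 2 + ‖⟪(A ^ n) a, f⟫‖ ^ 2 / ‖f‖) / 2 ≤ (U + K) / 2 * ‖f‖ := by
      rw [tsum_div_const, Summable.tsum_add (husq.mul_left ‖f‖) ((hSq' f).div_const ‖f‖),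
        tsum_mul_left, tsum_div_const]
      have h4 : ∑' n : ℕ, ‖⟪(A ^ n) a, f⟫‖ ^ 2 ≤ K * ‖f‖ ^ 2 := by
        refine le_trans (le_of_eq ?_) (hBd f)
        congr 1; funext n; rw [hnorm]
      rw [div_le_iff₀ (by norm_num : (0:ℝ) < 2)]
      have : (U + K) / 2 * ‖f‖ * 2 = ‖f‖ * U + K * ‖f‖ ^ 2 / ‖f‖ := by field_simp
      rw [this]
      gcongr
    exact h1.trans (h2.trans h3)
  set L : H →L[ℂ] ℂ := LinearMap.mkContinuous Llin ((U + K) / 2) hLbound with hLdef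
  have hmain := (b.hasSum_repr c).mapL L
  have hLc : L c = ((U : ℝ) : ℂ) := by
    show Llin c = _
    have : ∀ n : ℕ, (starRingEnd ℂ) (u n) * ⟪(A ^ n) a, c⟫ = ((‖u n‖ ^ 2 : ℝ) : ℂ) := by
      intro n
      rw [show ⟪(A ^ n) a, c⟫ = u n from rfl, RCLike.conj_mul]
      norm_cast
    show (∑' n : ℕ, (starRingEnd ℂ) (u n) * ⟪(A ^ n) a, c⟫) = _
    rw [funext this, hU]
    exact (Complex.ofReal_tsum _).symm
  have heval : ∀ k : J, L (b.repr c k • b k) =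
      ⟪b k, c⟫ * ∑' n : ℕ, (starRingEnd ℂ) (u n) * ⟪(A ^ n) a, b k⟫ := by
    intro k
    rw [_root_.map_smul, b.repr_apply_apply, smul_eq_mul]
    rfl
  rw [hLc] at hmain
  simpa only [heval] using hmain


end Aux

theorem stmt7
    {H : Type*} [NormedAddCommGroup H] [InnerProductSpace ℂ H] [CompleteSpace H]
    [TopologicalSpace.SeparableSpace H]
    {J : Type*} [Countable J]
    (A : H →L[ℂ] H) (b : HilbertBasis J ℂ H) (η : J → ℂ)
    (heig : ∀ j, A (b j) = η j • b j) (hη : ∀ j, ‖η j‖ < 1)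
    (a : H)
    (hBessel : ∃ K > (0 : ℝ), ∀ f : H, ∑' n : ℕ, ‖⟪f, (A ^ n) a⟫‖ ^ 2 ≤ K * ‖f‖ ^ 2)
    (c : H) :
    (∀ k : J, Summable fun j : J => (starRingEnd ℂ) ⟪b k, a⟫ * ⟪b k, c⟫ * ⟪b j, a⟫ * (starRingEnd ℂ) ⟪b j, c⟫ / (1 - η j * (starRingEnd ℂ) (η k))) ∧
    Summable (fun k : J => ∑' j : J, (starRingEnd ℂ) ⟪b k, a⟫ * ⟪b k, c⟫ * ⟪b j, a⟫ * (starRingEnd ℂ) ⟪b j, c⟫ / (1 - η j * (starRingEnd ℂ) (η k))) ∧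
    ((∑' n : ℕ, ‖⟪(A ^ n) a, c⟫‖ ^ 2 : ℝ) : ℂ) =
      ∑' k : J, ∑' j : J, (starRingEnd ℂ) ⟪b k, a⟫ * ⟪b k, c⟫ * ⟪b j, a⟫ * (starRingEnd ℂ) ⟪b j, c⟫ / (1 - η j * (starRingEnd ℂ) (η k)) := by
  classical
  -- eigenvalue relations
  have hA1 : ∀ (k : J) (y : H), ⟪b k, A y⟫ = η k * ⟪b k, y⟫ := by
    intro k y
    have hd : Dense ((Submodule.span ℂ (Set.range ⇑b) : Submodule ℂ H) : Set H) := by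
      rw [dense_iff_closure_eq, ← Submodule.topologicalClosure_coe, b.dense_span]
      rfl
    have hext : (innerSL ℂ (b k)).comp A = η k • innerSL ℂ (b k) := by
      refine ContinuousLinearMap.ext_on hd ?_
      rintro x ⟨j, rfl⟩
      simp only [ContinuousLinearMap.comp_apply, innerSL_apply_apply, ContinuousLinearMap.smul_apply,
        heig j, inner_smul_right, smul_eq_mul]
      rcases eq_or_ne j k with rfl | hjk
      · rfl
      · rw [b.orthonormal.2 (Ne.symm hjk)]; ring
    have := congrFun (congrArg DFunLike.coe hext) y
    simpa using this
  have hpow : ∀ (k : J) (n : ℕ) (y : H), ⟪b k, (A ^ n) y⟫ = η k ^ n * ⟪b k, y⟫ := by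
    intro k n
    induction n with
    | zero => intro y; simp
    | succ n ih =>
      intro y
      rw [pow_succ, ContinuousLinearMap.mul_apply, ih, hA1, pow_succ]
      ring
  obtain ⟨K, hK, hB⟩ := hBessel
  have hbes := auxBessel A b η a hpow hη K hB
  have hSq : ∀ f : H, Summable (fun n : ℕ => ‖⟪f, (A ^ n) a⟫‖ ^ 2) := fun f => (hbes f).1
  have hBd : ∀ f : H, ∑' n : ℕ, ‖⟪f, (A ^ n) a⟫‖ ^ 2 ≤ K * ‖f‖ ^ 2 := fun f => (hbes f).2
  -- square-summability of basis coefficients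
  have hcoef : ∀ x : H, Summable (fun j : J => ‖⟪b j, x⟫‖ ^ 2) := by
    intro x
    have h1 : HasSum (fun j : J => ⟪x, b j⟫ * ⟪b j, x⟫) ⟪x, x⟫ :=
      b.hasSum_inner_mul_inner x x
    have h2 : (fun j : J => ⟪x, b j⟫ * ⟪b j, x⟫) =
        fun j : J => ((‖⟪b j, x⟫‖ ^ 2 : ℝ) : ℂ) := by
      funext j
      rw [← inner_conj_symm x (b j), RCLike.conj_mul]
      norm_cast
    rw [h2] at h1
    exact Complex.summable_ofReal.mp h1.summable
  have habs : Summable (fun j : J => ‖⟪b j, a⟫‖ * ‖⟪b j, c⟫‖) := by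
    refine Summable.of_nonneg_of_le (fun j => by positivity) (fun j => ?_)
      (((hcoef a).add (hcoef c)).div_const 2)
    nlinarith [sq_nonneg (‖⟪b j, a⟫‖ - ‖⟪b j, c⟫‖)]
  -- Parseval for the orbit inner products
  have hun : ∀ n : ℕ, HasSum
      (fun j : J => η j ^ n * ⟪b j, a⟫ * (starRingEnd ℂ) ⟪b j, c⟫)
      ((starRingEnd ℂ) ⟪(A ^ n) a, c⟫) := by
    intro n
    have h1 : HasSum (fun j : J => ⟪c, b j⟫ * ⟪b j, (A ^ n) a⟫) ⟪c, (A ^ n) a⟫ :=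
      b.hasSum_inner_mul_inner c ((A ^ n) a)
    have h2 : (fun j : J => ⟪c, b j⟫ * ⟪b j, (A ^ n) a⟫) =
        fun j : J => η j ^ n * ⟪b j, a⟫ * (starRingEnd ℂ) ⟪b j, c⟫ := by
      funext j
      rw [hpow j n a, inner_conj_symm c (b j)]
      ring
    have h3 : ⟪c, (A ^ n) a⟫ = (starRingEnd ℂ) ⟪(A ^ n) a, c⟫ :=
      (inner_conj_symm _ _).symm
    rw [h2, h3] at h1
    exact h1
  have hpowk : ∀ (k : J) (n : ℕ), ⟪(A ^ n) a, b k⟫ =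
      (starRingEnd ℂ) (η k) ^ n * (starRingEnd ℂ) ⟪b k, a⟫ := by
    intro k n
    rw [← inner_conj_symm ((A ^ n) a) (b k), hpow k n a, map_mul, map_pow]
  have hmain := auxHasSum A b a K hSq hBd c
  have haux := fun k : J => auxInner η (fun j => ⟪b j, a⟫) (fun j => ⟪b j, c⟫)
    (fun n => ⟪(A ^ n) a, c⟫) hη habs hun k
  have hconv : ∀ k : J,
      ∑' j : J, (starRingEnd ℂ) ⟪b k, a⟫ * ⟪b k, c⟫ * ⟪b j, a⟫ * (starRingEnd ℂ) ⟪b j, c⟫ /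
          (1 - η j * (starRingEnd ℂ) (η k)) =
        ⟪b k, c⟫ * ∑' n : ℕ, (starRingEnd ℂ) ⟪(A ^ n) a, c⟫ * ⟪(A ^ n) a, b k⟫ := by
    intro k
    rw [(haux k).2]
    congr 1
    refine tsum_congr (fun n => ?_)
    rw [hpowk k n]
  refine ⟨fun k => (haux k).1, ?_, ?_⟩
  · exact (summable_congr (fun k => hconv k)).mpr hmain.summable
  · rw [tsum_congr hconv]
    exact hmain.tsum_eq.symm

end
end

section
/- Let H be an infinite-dimensional complex separable Hilbert space, let A ∈ B(H) be a normal operator, and let G ⊂ H be a finite set of vectors such that {e^{tA}g}_{g∈G, t∈[0,∞)} is a semi-continuous frame for H. Then for every ε > 0, the spectrum of A intersects the half-plane {z ∈ ℂ : Re(z) > −ε}; that is, there exists z ∈ σ(A) with Re(z) > −ε. -/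
open MeasureTheory
open scoped ComplexInnerProductSpace

noncomputable section

variable {H : Type*} [NormedAddCommGroup H] [InnerProductSpace ℂ H] [CompleteSpace H]

lemma exists_orthonormal_seq {H : Type*} [NormedAddCommGroup H] [InnerProductSpace ℂ H]
    [CompleteSpace H] (hinf : ¬ FiniteDimensional ℂ H) :
    ∃ e : ℕ → H, Orthonormal ℂ e := by
  obtain ⟨w, b, hb⟩ := exists_hilbertBasis ℂ H
  have hw : w.Infinite := by
    intro hfin
    apply hinf
    have hd : (Submodule.span ℂ (Set.range ⇑b)).topologicalClosure = ⊤ := b.dense_span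
    rw [show Set.range ⇑b = w by rw [hb]; exact Subtype.range_coe] at hd
    have hfd : FiniteDimensional ℂ (Submodule.span ℂ w) := FiniteDimensional.span_of_finite ℂ hfin
    have hcl : IsClosed ((Submodule.span ℂ w : Submodule ℂ H) : Set H) := Submodule.closed_of_finiteDimensional _
    have htop : Submodule.span ℂ w = ⊤ := by
      rw [← hd]
      exact hcl.submodule_topologicalClosure_eq.symm
    rw [htop] at hfd
    exact Module.Finite.equiv Submodule.topEquiv
  have emb : ℕ ↪ ↥w := hw.natEmbedding
  exact ⟨fun n => b (emb n), b.orthonormal.comp (fun n => emb n) emb.injective⟩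

lemma expT_norm_le {H : Type*} [NormedAddCommGroup H] [InnerProductSpace ℂ H]
    [CompleteSpace H] [Nontrivial H] (A : H →L[ℂ] H) (hA : IsStarNormal A) {ε : ℝ}
    (hspec : ∀ z ∈ spectrum ℂ A, z.re ≤ -ε) (t : ℝ) (ht : 0 ≤ t) :
    ‖expT A t‖ ≤ Real.exp (-(ε * t)) := by
  have hnt : Nontrivial (H →L[ℂ] H) := by
    obtain ⟨x, hx⟩ := exists_ne (0 : H)
    exact ⟨0, 1, fun h => hx (by simpa using congrFun (congrArg DFunLike.coe h.symm) x)⟩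
  have hsn : IsStarNormal ((t : ℂ) • A) := by
    constructor
    rw [Commute, SemiconjBy, star_smul, smul_mul_smul_comm, smul_mul_smul_comm,
      mul_comm (star (t:ℂ)) (t:ℂ), hA.star_comm_self.eq]
  rw [expT, ← CFC.complex_exp_eq_normedSpace_exp hsn]
  apply norm_cfc_le (Real.exp_nonneg _)
  intro x hx
  rw [spectrum.smul_eq_smul (t : ℂ) A (spectrum.nonempty A)] at hx
  obtain ⟨z, hz, rfl⟩ := hx
  rw [show (fun x => (t:ℂ) • x) z = (t:ℂ) * z from rfl, Complex.norm_exp, Real.exp_le_exp]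
  have : ((t : ℂ) * z).re = t * z.re := by simp [Complex.mul_re]
  rw [this]
  calc t * z.re ≤ t * (-ε) := by nlinarith [hspec z hz]
    _ = -(ε * t) := by ring

theorem stmt15
    {H : Type*} [NormedAddCommGroup H] [InnerProductSpace ℂ H] [CompleteSpace H]
    [TopologicalSpace.SeparableSpace H]
    (hinf : ¬ FiniteDimensional ℂ H)
    (A : H →L[ℂ] H)
    (hnormal : A.comp (ContinuousLinearMap.adjoint A) = (ContinuousLinearMap.adjoint A).comp A)
    (G : Finset H)
    (hframe : ∃ c > (0 : ℝ), ∃ C > (0 : ℝ), ∀ f : H,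
      c * ‖f‖ ^ 2 ≤ ∑ g ∈ G, ∫ t in Set.Ici (0 : ℝ), ‖⟪f, expT A t g⟫‖ ^ 2 ∧
      ∑ g ∈ G, ∫ t in Set.Ici (0 : ℝ), ‖⟪f, expT A t g⟫‖ ^ 2 ≤ C * ‖f‖ ^ 2) :
    ∀ ε > (0 : ℝ), ∃ z ∈ spectrum ℂ A, -ε < z.re := by
  intro ε hε
  by_contra hcon
  push_neg at hcon
  have hnt : Nontrivial H := by
    by_contra h
    rw [not_nontrivial_iff_subsingleton] at h
    exact hinf inferInstance
  have hA : IsStarNormal A := by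
    constructor
    rw [Commute, SemiconjBy, ContinuousLinearMap.star_eq_adjoint]
    exact hnormal.symm
  have hnorm : ∀ t : ℝ, 0 ≤ t → ‖expT A t‖ ≤ Real.exp (-(ε * t)) :=
    expT_norm_le A hA (fun z hz => le_of_not_gt fun h => absurd (hcon z hz) (not_le.mpr h))
  obtain ⟨e, he⟩ := exists_orthonormal_seq hinf
  obtain ⟨c, hc, C, hC, hfr⟩ := hframe
  have hcont : ∀ g : H, Continuous fun t : ℝ => expT A t g := by
    intro g
    have h1 : Continuous fun t : ℝ => ((t : ℂ) • A) :=
      Complex.continuous_ofReal.smul continuous_const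
    exact ((continuous_iff_continuousAt.2 fun x => (NormedSpace.exp_analytic (𝕂 := ℂ) x).continuousAt).comp h1).clm_apply continuous_const
  set D : H → ℝ → ℝ := fun g t => Real.exp (-(2 * ε) * t) * ‖g‖ ^ 2 with hD
  have hDint : ∀ g : H, IntegrableOn (D g) (Set.Ici 0) := fun g =>
    Iff.mpr integrableOn_Ici_iff_integrableOn_Ioi
      ((exp_neg_integrableOn_Ioi 0 (by linarith)).mul_const _)
  have hbound : ∀ g : H, ∀ t ∈ Set.Ici (0 : ℝ), ‖expT A t g‖ ^ 2 ≤ D g t := by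
    intro g t ht
    have h1 : ‖expT A t g‖ ≤ Real.exp (-(ε * t)) * ‖g‖ :=
      (ContinuousLinearMap.le_opNorm _ _).trans
        (mul_le_mul_of_nonneg_right (hnorm t ht) (norm_nonneg g))
    calc ‖expT A t g‖ ^ 2 ≤ (Real.exp (-(ε * t)) * ‖g‖) ^ 2 :=
          pow_le_pow_left₀ (norm_nonneg _) h1 2
      _ = D g t := by
          rw [hD]
          simp only [mul_pow, sq (Real.exp _), ← Real.exp_add]
          ring_nf
  have hFint : ∀ (n : ℕ) (g : H),
      IntegrableOn (fun t => ‖⟪e n, expT A t g⟫‖ ^ 2) (Set.Ici 0) := by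
    intro n g
    refine Integrable.mono' (hDint g) ?_ ?_
    · exact ((continuous_const.inner (hcont g)).norm.pow 2).aestronglyMeasurable
    · filter_upwards [ae_restrict_mem measurableSet_Ici] with t ht
      rw [Real.norm_eq_abs, abs_of_nonneg (by positivity)]
      have h2 : ‖⟪e n, expT A t g⟫‖ ≤ ‖expT A t g‖ := by
        simpa [he.1 n] using norm_inner_le_norm (𝕜 := ℂ) (e n) (expT A t g)
      exact (pow_le_pow_left₀ (norm_nonneg _) h2 2).trans (hbound g t ht)
  set B : ℝ := ∑ g ∈ G, ∫ t in Set.Ici (0 : ℝ), D g t with hB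
  obtain ⟨N, hN⟩ := exists_nat_gt (B / c)
  have key : (N : ℝ) * c ≤ B := by
    have h1 : (N : ℝ) * c = ∑ _n ∈ Finset.range N, c := by
      simp [mul_comm]
    rw [h1]
    calc ∑ n ∈ Finset.range N, c
        ≤ ∑ n ∈ Finset.range N, ∑ g ∈ G, ∫ t in Set.Ici (0 : ℝ),
            ‖⟪e n, expT A t g⟫‖ ^ 2 := by
          refine Finset.sum_le_sum fun n _ => ?_
          have := (hfr (e n)).1
          simpa [he.1 n] using this
      _ = ∑ g ∈ G, ∑ n ∈ Finset.range N, ∫ t in Set.Ici (0 : ℝ),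
            ‖⟪e n, expT A t g⟫‖ ^ 2 := Finset.sum_comm
      _ = ∑ g ∈ G, ∫ t in Set.Ici (0 : ℝ),
            ∑ n ∈ Finset.range N, ‖⟪e n, expT A t g⟫‖ ^ 2 := by
          refine Finset.sum_congr rfl fun g _ => ?_
          exact (integral_finset_sum _ fun n _ => hFint n g).symm
      _ ≤ ∑ g ∈ G, ∫ t in Set.Ici (0 : ℝ), D g t := by
          refine Finset.sum_le_sum fun g _ => ?_
          refine setIntegral_mono_on
            (integrable_finset_sum _ fun n _ => hFint n g) (hDint g)
            measurableSet_Ici fun t ht => ?_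
          exact (he.sum_inner_products_le _).trans (hbound g t ht)
  rw [div_lt_iff₀ hc] at hN
  linarith


end
end

section
/- Let H be a complex separable Hilbert space, A ∈ B(H), and G ⊂ H a countable Bessel system with constant K > 0. Suppose ‖e^{tA}‖ ≤ M e^{ωt} for all t ≥ 0, where M ≥ 1 and ω < 0. Let T = {t_j : j ∈ ℕ} ⊂ [0,∞) be an increasing sequence with δ₀ := inf_{j∈ℕ} (t_{j+1} − t_j) > 0 (so that t_j ≥ (j−1)δ₀ for all j). Then Σ_{j∈ℕ} Σ_{g∈G} |⟨f, e^{t_j A} g⟩|² ≤ (K M² / (1 − e^{2ωδ₀})) ‖f‖² for all f ∈ H; in particular {e^{t_j A}g}_{g∈G, j∈ℕ} is a Bessel system in H. -/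
open MeasureTheory
open scoped ComplexInnerProductSpace

noncomputable section

variable {H : Type*} [NormedAddCommGroup H] [InnerProductSpace ℂ H] [CompleteSpace H]

theorem stmt16
    {H : Type*} [NormedAddCommGroup H] [InnerProductSpace ℂ H] [CompleteSpace H]
    [TopologicalSpace.SeparableSpace H]
    (A : H →L[ℂ] H) (G : Set H) (hGc : G.Countable)
    (K : ℝ) (hK : 0 < K)
    (hG : ∀ f : H, ∑' g : G, ‖⟪f, (g : H)⟫‖ ^ 2 ≤ K * ‖f‖ ^ 2)
    (M ω : ℝ) (hM : 1 ≤ M) (hω : ω < 0)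
    (hA : ∀ t : ℝ, 0 ≤ t → ‖expT A t‖ ≤ M * Real.exp (ω * t))
    (t : ℕ → ℝ) (ht0 : ∀ j, 0 ≤ t j) (hmono : StrictMono t)
    (δ₀ : ℝ) (hδ₀ : 0 < δ₀) (hsep : ∀ j, δ₀ ≤ t (j + 1) - t j) :
    ∀ f : H,
      ∑' j : ℕ, ∑' g : G, ‖⟪f, expT A (t j) (g : H)⟫‖ ^ 2 ≤
        K * M ^ 2 / (1 - Real.exp (2 * ω * δ₀)) * ‖f‖ ^ 2 := by
  intro f
  set r : ℝ := Real.exp (2 * ω * δ₀) with hr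
  have hr0 : 0 < r := Real.exp_pos _
  have hr1 : r < 1 := by
    rw [hr]
    apply Real.exp_lt_one_iff.mpr
    have : 2 * ω < 0 := by linarith
    exact mul_neg_of_neg_of_pos this hδ₀
  -- lower bound on t j
  have htj : ∀ j : ℕ, (j : ℝ) * δ₀ ≤ t j := by
    intro j
    induction j with
    | zero => simpa using ht0 0
    | succ n ih =>
      have := hsep n
      push_cast
      linarith
  -- per-term bound
  have hterm : ∀ j : ℕ, ∑' g : G, ‖⟪f, expT A (t j) (g : H)⟫‖ ^ 2 ≤
      K * M ^ 2 * ‖f‖ ^ 2 * r ^ j := by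
    intro j
    have hadj : ∀ g : H, ⟪f, expT A (t j) g⟫ =
        ⟪(ContinuousLinearMap.adjoint (expT A (t j))) f, g⟫ := by
      intro g
      rw [ContinuousLinearMap.adjoint_inner_left]
    have h1 : ∑' g : G, ‖⟪f, expT A (t j) (g : H)⟫‖ ^ 2 =
        ∑' g : G, ‖⟪(ContinuousLinearMap.adjoint (expT A (t j))) f, (g : H)⟫‖ ^ 2 := by
      apply tsum_congr; intro g; rw [hadj]
    rw [h1]
    calc ∑' g : G, ‖⟪(ContinuousLinearMap.adjoint (expT A (t j))) f, (g : H)⟫‖ ^ 2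
        ≤ K * ‖(ContinuousLinearMap.adjoint (expT A (t j))) f‖ ^ 2 := hG _
      _ ≤ K * (M * Real.exp (ω * t j) * ‖f‖) ^ 2 := by
          apply mul_le_mul_of_nonneg_left _ hK.le
          apply pow_le_pow_left₀ (norm_nonneg _)
          calc ‖(ContinuousLinearMap.adjoint (expT A (t j))) f‖
              ≤ ‖ContinuousLinearMap.adjoint (expT A (t j))‖ * ‖f‖ :=
                (ContinuousLinearMap.adjoint (expT A (t j))).le_opNorm f
            _ = ‖expT A (t j)‖ * ‖f‖ := by rw [LinearIsometryEquiv.norm_map ContinuousLinearMap.adjoint]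
            _ ≤ M * Real.exp (ω * t j) * ‖f‖ :=
                mul_le_mul_of_nonneg_right (hA _ (ht0 j)) (norm_nonneg _)
      _ ≤ K * M ^ 2 * ‖f‖ ^ 2 * r ^ j := by
          have hexp : Real.exp (ω * t j) ^ 2 ≤ r ^ j := by
            have e1 : Real.exp (ω * t j) ^ 2 = Real.exp (2 * (ω * t j)) := by
              rw [sq, ← Real.exp_add]; ring_nf
            have e2 : r ^ j = Real.exp (2 * ω * δ₀ * j) := by
              rw [hr, ← Real.exp_nat_mul]; ring_nf
            rw [e1, e2]
            apply Real.exp_le_exp.mpr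
            nlinarith [mul_le_mul_of_nonneg_left (htj j) (neg_nonneg.mpr (le_of_lt hω))]
          calc K * (M * Real.exp (ω * t j) * ‖f‖) ^ 2
              = K * (M ^ 2 * ‖f‖ ^ 2) * Real.exp (ω * t j) ^ 2 := by ring
            _ ≤ K * (M ^ 2 * ‖f‖ ^ 2) * r ^ j := by
                apply mul_le_mul_of_nonneg_left hexp
                positivity
            _ = K * M ^ 2 * ‖f‖ ^ 2 * r ^ j := by ring
  have hgeo : Summable (fun j : ℕ => K * M ^ 2 * ‖f‖ ^ 2 * r ^ j) :=
    (summable_geometric_of_lt_one hr0.le hr1).mul_left _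
  have hnn : ∀ j : ℕ, 0 ≤ ∑' g : G, ‖⟪f, expT A (t j) (g : H)⟫‖ ^ 2 := by
    intro j
    exact tsum_nonneg fun g => by positivity
  have hsum : Summable (fun j : ℕ => ∑' g : G, ‖⟪f, expT A (t j) (g : H)⟫‖ ^ 2) :=
    Summable.of_nonneg_of_le hnn hterm hgeo
  calc ∑' j : ℕ, ∑' g : G, ‖⟪f, expT A (t j) (g : H)⟫‖ ^ 2
      ≤ ∑' j : ℕ, K * M ^ 2 * ‖f‖ ^ 2 * r ^ j := Summable.tsum_le_tsum hterm hsum hgeo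
    _ = K * M ^ 2 * ‖f‖ ^ 2 * (1 - r)⁻¹ := by
        rw [tsum_mul_left, tsum_geometric_of_lt_one hr0.le hr1]
    _ = K * M ^ 2 / (1 - r) * ‖f‖ ^ 2 := by
        field_simp


end
end
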